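/- arXiv:math/0404308 — 5 statements merged into one kernel-verified Lean document; each statement's English description precedes it below -/
import Mathlib

section
/- For a permutation σ in the symmetric group S_n, let ♯σ denote its number of cycles (including fixed points). For any integer N > n, the element Φ^N = Σ_{σ ∈ S_n} N^{♯σ}·σ of the group algebra ℂ[S_n] is invertible. -/
/-- The number of cycles of a permutation of `Fin n`, counting fixed points. -/
def cycleCount {n : ℕ} (σ : Equiv.Perm (Fin n)) : ℕ :=
  σ.cycleType.card + (n - σ.support.card)

open Equiv Equiv.Perm Finset MonoidAlgebra

set_option linter.unusedSectionVars false

section CycleLemmas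

variable {α : Type*} [DecidableEq α] [Fintype α]

lemma mul_swap_pow_aux {c : Perm α} {i k : α} (hk : c k = k) (hik : i ≠ k) :
    ∀ t : ℕ, (∀ s, 0 < s → s ≤ t → (c ^ s) i ≠ i) →
      ((c * Equiv.swap i k) ^ (t + 2)) i = (c ^ (t + 1)) i := by
  have hdi : (c * Equiv.swap i k) i = k := by
    simp [Equiv.Perm.mul_apply, Equiv.swap_apply_left, hk]
  have hdk : (c * Equiv.swap i k) k = c i := by
    simp [Equiv.Perm.mul_apply, Equiv.swap_apply_right]
  intro t
  induction t with
  | zero =>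
    intro _
    have : ((c * Equiv.swap i k) ^ 2) i = (c * Equiv.swap i k) ((c * Equiv.swap i k) i) := by
      rw [pow_two]; rfl
    rw [this, hdi, hdk, pow_one]
  | succ t ih =>
    intro hcond
    have h1 : ((c * Equiv.swap i k) ^ (t + 2)) i = (c ^ (t + 1)) i :=
      ih (fun s hs hst => hcond s hs (hst.trans (Nat.le_succ t)))
    have hne_i : (c ^ (t + 1)) i ≠ i := hcond (t + 1) (Nat.succ_pos t) (le_refl _)
    have hne_k : (c ^ (t + 1)) i ≠ k := by
      intro h
      have hkfix : (c ^ (t + 1)) k = k := pow_apply_eq_self_of_apply_eq_self hk _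
      exact hik ((c ^ (t + 1)).injective (h.trans hkfix.symm))
    have : ((c * Equiv.swap i k) ^ (t + 3)) i
        = (c * Equiv.swap i k) (((c * Equiv.swap i k) ^ (t + 2)) i) := by
      rw [pow_succ']; rfl
    rw [this, h1]
    have : (c * Equiv.swap i k) ((c ^ (t + 1)) i) = c ((c ^ (t + 1)) i) := by
      simp [Equiv.Perm.mul_apply, Equiv.swap_apply_of_ne_of_ne hne_i hne_k]
    rw [this, ← Equiv.Perm.mul_apply, ← pow_succ']

lemma support_mul_swap {c : Perm α} {i k : α} (hi : c i ≠ i) (hk : c k = k) (hik : i ≠ k) :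
    (c * Equiv.swap i k).support = insert k c.support := by
  have hdi : (c * Equiv.swap i k) i = k := by
    simp [Equiv.Perm.mul_apply, Equiv.swap_apply_left, hk]
  have hdk : (c * Equiv.swap i k) k = c i := by
    simp [Equiv.Perm.mul_apply, Equiv.swap_apply_right]
  have hcik : c i ≠ k := fun h => hik (c.injective (h.trans hk.symm))
  ext x
  simp only [Equiv.Perm.mem_support, Finset.mem_insert]
  rcases eq_or_ne x k with rfl | hxk
  · simp [hdk, hcik]
  · rcases eq_or_ne x i with rfl | hxi
    · simp [hdi, hik.symm, hi, Ne.symm hik]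
    · have : (c * Equiv.swap i k) x = c x := by
        simp [Equiv.Perm.mul_apply, Equiv.swap_apply_of_ne_of_ne hxi hxk]
      simp [this, hxk]

lemma isCycle_mul_swap {c : Perm α} (hc : c.IsCycle) {i k : α} (hi : c i ≠ i) (hk : c k = k)
    (hik : i ≠ k) : IsCycle (c * Equiv.swap i k) := by
  have hdi : (c * Equiv.swap i k) i = k := by
    simp [Equiv.Perm.mul_apply, Equiv.swap_apply_left, hk]
  have hdk : (c * Equiv.swap i k) k = c i := by
    simp [Equiv.Perm.mul_apply, Equiv.swap_apply_right]
  refine ⟨i, by rw [hdi]; exact Ne.symm hik, ?_⟩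
  intro y hy
  rcases eq_or_ne y i with rfl | hyi
  · exact ⟨0, rfl⟩
  rcases eq_or_ne y k with rfl | hyk
  · exact ⟨1, by simpa using hdi⟩
  have hcy : c y ≠ y := by
    intro h
    apply hy
    simp [Equiv.Perm.mul_apply, Equiv.swap_apply_of_ne_of_ne hyi hyk, h]
  have hsc : c.SameCycle i y := hc.sameCycle hi hcy
  obtain ⟨t, htlt, hte⟩ := hsc.exists_pow_eq'
  have ht0 : t ≠ 0 := by rintro rfl; exact hyi (by simpa using hte.symm)
  obtain ⟨u, rfl⟩ := Nat.exists_eq_succ_of_ne_zero ht0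
  have hcond : ∀ s, 0 < s → s ≤ u → (c ^ s) i ≠ i := by
    intro s hs hsu h
    have h1 : c ^ s = 1 := (hc.pow_eq_one_iff' hi).2 h
    have := orderOf_le_of_pow_eq_one hs h1
    omega
  have := mul_swap_pow_aux hk hik u hcond
  exact ⟨((u + 2 : ℕ) : ℤ), by
    rw [zpow_natCast, this]
    simpa [Nat.succ_eq_add_one] using hte⟩

end CycleLemmas

lemma cycleCount_mul_swap {n : ℕ} {f : Perm (Fin n)} {i k : Fin n} (hk : f k = k) (hik : i ≠ k) :
    cycleCount (f * Equiv.swap i k) + 1 = cycleCount f := by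
  have hnsupp : ∀ g : Perm (Fin n), g.support.card ≤ n := fun g => by
    simpa using Finset.card_le_univ g.support
  have hkns : k ∉ f.support := by simp [Equiv.Perm.mem_support, hk]
  by_cases hi : f i = i
  · -- disjoint case
    have hd : Disjoint f (Equiv.swap i k) := by
      intro x
      rcases eq_or_ne x i with rfl | hxi
      · exact Or.inl hi
      rcases eq_or_ne x k with rfl | hxk
      · exact Or.inl hk
      · exact Or.inr (Equiv.swap_apply_of_ne_of_ne hxi hxk)
    have hct : (f * Equiv.swap i k).cycleType = f.cycleType + (Equiv.swap i k).cycleType :=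
      hd.cycleType_mul
    have hswct : (Equiv.swap i k).cycleType = {2} := by
      rw [(isCycle_swap hik).cycleType, card_support_swap hik]
    have hsupp : (f * Equiv.swap i k).support.card = f.support.card + 2 := by
      rw [hd.card_support_mul, card_support_swap hik]
    have hle : f.support.card + 2 ≤ n := by
      have := hnsupp (f * Equiv.swap i k); omega
    simp only [cycleCount, hct, hswct, hsupp, Multiset.card_add, Multiset.card_singleton]
    omega
  · -- i lies in a genuine cycle of f
    set c := f.cycleOf i with hc
    have hcyc : c.IsCycle := isCycle_cycleOf f hi
    have hci : c i ≠ i := by rw [hc, cycleOf_apply_self]; exact hi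
    have hck : c k = k := by
      have : k ∉ c.support := fun h => hkns (support_cycleOf_le f i h)
      simpa [Equiv.Perm.mem_support, not_not] using this
    have hmem : c ∈ f.cycleFactorsFinset := cycleOf_mem_cycleFactorsFinset_iff.2 (mem_support.2 hi)
    have hdisj : Disjoint (f * c⁻¹) c := disjoint_mul_inv_of_mem_cycleFactorsFinset hmem
    have hfck : (f * c⁻¹) k = k := by
      have hck' : c⁻¹ k = k := by
        apply c.injective; simp [hck]
      simp [Equiv.Perm.mul_apply, hck', hk]
    have hdisj2 : Disjoint (f * c⁻¹) (c * Equiv.swap i k) := by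
      intro x
      rcases eq_or_ne x k with rfl | hxk
      · exact Or.inl hfck
      rcases (hdisj x) with h | h
      · exact Or.inl h
      · right
        rcases eq_or_ne x i with rfl | hxi
        · exact absurd h hci
        · simp [Equiv.Perm.mul_apply, Equiv.swap_apply_of_ne_of_ne hxi hxk, h]
    have hcyc2 : (c * Equiv.swap i k).IsCycle := isCycle_mul_swap hcyc hci hck hik
    have hsupp2 : (c * Equiv.swap i k).support = insert k c.support := support_mul_swap hci hck hik
    have hkcs : k ∉ c.support := fun h => hkns (support_cycleOf_le f i h)
    have hcard2 : (c * Equiv.swap i k).support.card = c.support.card + 1 := by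
      rw [hsupp2, Finset.card_insert_of_notMem hkcs]
    have hfeq : f = (f * c⁻¹) * c := by group
    have hfeq2 : f * Equiv.swap i k = (f * c⁻¹) * (c * Equiv.swap i k) := by group
    have hctf : f.cycleType = (f * c⁻¹).cycleType + {c.support.card} := by
      conv_lhs => rw [hfeq]
      rw [hdisj.cycleType_mul, hcyc.cycleType]
    have hctf2 : (f * Equiv.swap i k).cycleType
        = (f * c⁻¹).cycleType + {c.support.card + 1} := by
      rw [hfeq2, hdisj2.cycleType_mul, hcyc2.cycleType, hcard2]
    have hsf : f.support.card = (f * c⁻¹).support.card + c.support.card := by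
      conv_lhs => rw [hfeq]
      rw [hdisj.card_support_mul]
    have hsf2 : (f * Equiv.swap i k).support.card
        = (f * c⁻¹).support.card + c.support.card + 1 := by
      rw [hfeq2, hdisj2.card_support_mul, hcard2]; ring
    have hle : (f * c⁻¹).support.card + c.support.card + 1 ≤ n := by
      have := hnsupp (f * Equiv.swap i k); omega
    simp only [cycleCount, hctf, hctf2, hsf, hsf2, Multiset.card_add, Multiset.card_singleton]
    omega

def Sset (n m : ℕ) : Finset (Perm (Fin n)) :=
  univ.filter (fun σ => ∀ x : Fin n, m ≤ x.val → σ x = x)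

lemma mem_Sset {n m : ℕ} {σ : Perm (Fin n)} :
    σ ∈ Sset n m ↔ ∀ x : Fin n, m ≤ x.val → σ x = x := by
  simp [Sset]

noncomputable def Pel (n N m : ℕ) : MonoidAlgebra ℂ (Equiv.Perm (Fin n)) :=
  ∑ σ ∈ Sset n m, MonoidAlgebra.single σ ((N : ℂ) ^ cycleCount σ)

lemma key_step (n N m : ℕ) (hm : m < n) :
    Pel n N m * (MonoidAlgebra.single 1 (N : ℂ)
      + ∑ i ∈ univ.filter (fun i : Fin n => (i : ℕ) < m),
          MonoidAlgebra.single (Equiv.swap i ⟨m, hm⟩) 1)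
    = MonoidAlgebra.single (1 : Perm (Fin n)) (N : ℂ) * Pel n N (m + 1) := by
  set k : Fin n := ⟨m, hm⟩ with hkdef
  set I : Finset (Fin n) := univ.filter (fun i : Fin n => (i : ℕ) < m) with hI
  have hIk : ∀ i ∈ I, i ≠ k := by
    intro i hi
    simp only [hI, mem_filter] at hi
    intro h; rw [h] at hi; simp [hkdef] at hi
  have hSk : ∀ τ ∈ Sset n m, τ k = k := fun τ hτ => (mem_Sset.1 hτ) k (le_refl m)
  rw [mul_add]
  have hL1 : Pel n N m * MonoidAlgebra.single 1 (N : ℂ)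
      = ∑ τ ∈ Sset n m, MonoidAlgebra.single τ ((N : ℂ) * (N : ℂ) ^ cycleCount τ) := by
    rw [Pel, Finset.sum_mul]
    refine Finset.sum_congr rfl fun τ _ => ?_
    rw [MonoidAlgebra.single_mul_single, mul_one, mul_comm]
  have hL2 : Pel n N m * (∑ i ∈ I, MonoidAlgebra.single (Equiv.swap i k) 1)
      = ∑ p ∈ Sset n m ×ˢ I,
          MonoidAlgebra.single (p.1 * Equiv.swap p.2 k) ((N : ℂ) ^ cycleCount p.1) := by
    rw [Pel, Finset.sum_mul_sum, Finset.sum_product]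
    refine Finset.sum_congr rfl fun τ _ => Finset.sum_congr rfl fun i _ => ?_
    rw [MonoidAlgebra.single_mul_single, mul_one]
  rw [hL1, hL2]
  have hR : MonoidAlgebra.single (1 : Perm (Fin n)) (N : ℂ) * Pel n N (m + 1)
      = ∑ σ ∈ Sset n (m + 1), MonoidAlgebra.single σ ((N : ℂ) * (N : ℂ) ^ cycleCount σ) := by
    rw [Pel, Finset.mul_sum]
    refine Finset.sum_congr rfl fun σ _ => ?_
    rw [MonoidAlgebra.single_mul_single, one_mul]
  rw [hR]
  rw [← Finset.sum_filter_add_sum_filter_not (Sset n (m + 1)) (fun σ => σ k = k)]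
  have hfilter : (Sset n (m + 1)).filter (fun σ => σ k = k) = Sset n m := by
    ext σ
    simp only [mem_filter, mem_Sset]
    constructor
    · rintro ⟨h1, h2⟩ x hx
      rcases eq_or_ne x k with rfl | hxk
      · exact h2
      · refine h1 x ?_
        have : x.val ≠ m := fun h => hxk (Fin.ext h)
        omega
    · intro h
      exact ⟨fun x hx => h x (by omega), h k (le_refl m)⟩
  rw [hfilter]
  congr 1
  refine Finset.sum_bij' (fun p _ => p.1 * Equiv.swap p.2 k)
    (fun σ _ => (σ * Equiv.swap (σ⁻¹ k) k, σ⁻¹ k)) ?_ ?_ ?_ ?_ ?_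
  · -- forward membership
    rintro ⟨τ, i⟩ hp
    simp only [Finset.mem_product] at hp
    obtain ⟨hτ, hi⟩ := hp
    have hik : i ≠ k := hIk i hi
    have him : (i : ℕ) < m := by simpa [hI] using hi
    have hτk : τ k = k := hSk τ hτ
    simp only [mem_filter, mem_Sset]
    constructor
    · intro x hx
      have hxk : x ≠ k := by
        intro h; rw [h] at hx; simp [hkdef] at hx
      have hxi : x ≠ i := by
        intro h; rw [h] at hx; omega
      simp only [Equiv.Perm.mul_apply, Equiv.swap_apply_of_ne_of_ne hxi hxk]
      exact (mem_Sset.1 hτ) x (by omega)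
    · simp only [Equiv.Perm.mul_apply, Equiv.swap_apply_right]
      intro h
      exact hik (τ.injective (h.trans hτk.symm))
  · -- backward membership
    intro σ hσ
    simp only [mem_filter, mem_Sset] at hσ
    obtain ⟨hσ1, hσ2⟩ := hσ
    have hinv : σ (σ⁻¹ k) = k := by simp
    have hi_ne : σ⁻¹ k ≠ k := by
      intro h; rw [h] at hinv; exact hσ2 hinv
    have hi_lt : ((σ⁻¹ k : Fin n) : ℕ) < m := by
      by_contra h
      push_neg at h
      have hne : ((σ⁻¹ k : Fin n) : ℕ) ≠ m := by
        intro hh; exact hi_ne (Fin.ext hh)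
      have : σ (σ⁻¹ k) = σ⁻¹ k := hσ1 _ (by omega)
      rw [hinv] at this
      exact hi_ne this.symm
    simp only [Finset.mem_product]
    refine ⟨mem_Sset.2 ?_, by simp [hI]; exact hi_lt⟩
    intro x hx
    rcases eq_or_ne x k with rfl | hxk
    · simp only [Equiv.Perm.mul_apply, Equiv.swap_apply_right]
      exact hinv
    · have hxi : x ≠ σ⁻¹ k := by
        intro h; rw [h] at hx; omega
      simp only [Equiv.Perm.mul_apply, Equiv.swap_apply_of_ne_of_ne hxi hxk]
      have : x.val ≠ m := fun h => hxk (Fin.ext h)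
      exact hσ1 x (by omega)
  · -- left inverse
    rintro ⟨τ, i⟩ hp
    simp only [Finset.mem_product] at hp
    obtain ⟨hτ, hi⟩ := hp
    have hik : i ≠ k := hIk i hi
    have hτk : τ k = k := hSk τ hτ
    have h1 : (τ * Equiv.swap i k) i = k := by
      simp [Equiv.Perm.mul_apply, Equiv.swap_apply_left, hτk]
    have h2 : (τ * Equiv.swap i k)⁻¹ k = i := by
      apply (τ * Equiv.swap i k).injective
      simp [h1]
    show (τ * Equiv.swap i k * Equiv.swap ((τ * Equiv.swap i k)⁻¹ k) k,
      (τ * Equiv.swap i k)⁻¹ k) = (τ, i)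
    rw [h2, mul_assoc, Equiv.swap_mul_self, mul_one]
  · -- right inverse
    intro σ hσ
    show σ * Equiv.swap (σ⁻¹ k) k * Equiv.swap (σ⁻¹ k) k = σ
    rw [mul_assoc, Equiv.swap_mul_self, mul_one]
  · -- values
    rintro ⟨τ, i⟩ hp
    simp only [Finset.mem_product] at hp
    obtain ⟨hτ, hi⟩ := hp
    have hik : i ≠ k := hIk i hi
    have hτk : τ k = k := hSk τ hτ
    have hcc : cycleCount (τ * Equiv.swap i k) + 1 = cycleCount τ :=
      cycleCount_mul_swap hτk hik
    congr 1
    rw [← hcc, pow_succ, mul_comm]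

noncomputable instance instFD (n : ℕ) :
    FiniteDimensional ℂ (MonoidAlgebra ℂ (Equiv.Perm (Fin n))) :=
  Module.Finite.equiv ((MonoidAlgebra.coeffLinearEquiv ℂ).trans
    (Finsupp.linearEquivFunOnFinite ℂ ℂ (Equiv.Perm (Fin n)))).symm

lemma isUnit_factor (n N m : ℕ) (hm : m < n) (hN : n < N) :
    IsUnit (MonoidAlgebra.single (1 : Perm (Fin n)) (N : ℂ)
      + ∑ i ∈ univ.filter (fun i : Fin n => (i : ℕ) < m),
          MonoidAlgebra.single (Equiv.swap i ⟨m, hm⟩) 1) := by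
  set k : Fin n := ⟨m, hm⟩ with hkdef
  set I : Finset (Fin n) := univ.filter (fun i : Fin n => (i : ℕ) < m) with hI
  set a : MonoidAlgebra ℂ (Perm (Fin n)) :=
    MonoidAlgebra.single (1 : Perm (Fin n)) (N : ℂ)
      + ∑ i ∈ I, MonoidAlgebra.single (Equiv.swap i k) 1 with ha
  have hInz : I.card ≤ n := by
    have := Finset.card_le_univ I
    simpa using this
  have hinj : ∀ v : MonoidAlgebra ℂ (Perm (Fin n)), a * v = 0 → v = 0 := by
    intro v hv
    have hApp : ∀ g : Perm (Fin n),
        (N : ℂ) * v.coeff g + ∑ i ∈ I, v.coeff (Equiv.swap i k * g) = 0 := by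
      intro g
      have h0 : (a * v).coeff g = 0 := by rw [hv]; rfl
      rw [ha, add_mul, Finset.sum_mul] at h0
      have e1 : ((MonoidAlgebra.single (1 : Perm (Fin n)) (N : ℂ) * v)
          + ((∑ i ∈ I, MonoidAlgebra.single (Equiv.swap i k) 1 * v :
              MonoidAlgebra ℂ (Perm (Fin n))))).coeff g
          = (MonoidAlgebra.single (1 : Perm (Fin n)) (N : ℂ) * v).coeff g
            + ((∑ i ∈ I, MonoidAlgebra.single (Equiv.swap i k) 1 * v :
                MonoidAlgebra ℂ (Perm (Fin n)))).coeff g := by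
        rw [MonoidAlgebra.coeff_add]; rfl
      have e2 : ((∑ i ∈ I, MonoidAlgebra.single (Equiv.swap i k) 1 * v :
            MonoidAlgebra ℂ (Perm (Fin n)))).coeff g
          = ∑ i ∈ I, ((MonoidAlgebra.single (Equiv.swap i k) 1 * v :
              MonoidAlgebra ℂ (Perm (Fin n)))).coeff g := by
        rw [MonoidAlgebra.coeff_sum, Finsupp.finset_sum_apply]
      rw [e1, e2] at h0
      simpa [MonoidAlgebra.coeff_single_mul_apply] using h0
    obtain ⟨g₀, -, hmax⟩ := Finset.exists_max_image (univ : Finset (Perm (Fin n)))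
      (fun g => ‖v.coeff g‖) ⟨1, Finset.mem_univ 1⟩
    have key : (N : ℝ) * ‖v.coeff g₀‖ ≤ (n : ℝ) * ‖v.coeff g₀‖ := by
      have h1 : (N : ℂ) * v.coeff g₀ = -∑ i ∈ I, v.coeff (Equiv.swap i k * g₀) := by
        have := hApp g₀; linear_combination this
      have h2 : ‖(N : ℂ) * v.coeff g₀‖
          = (N : ℝ) * ‖v.coeff g₀‖ := by
        rw [norm_mul, Complex.norm_natCast]
      have h3 : ‖∑ i ∈ I, v.coeff (Equiv.swap i k * g₀)‖
          ≤ ∑ i ∈ I, ‖v.coeff (Equiv.swap i k * g₀)‖ :=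
        norm_sum_le _ _
      have h4 : ∑ i ∈ I, ‖v.coeff (Equiv.swap i k * g₀)‖
          ≤ ∑ _i ∈ I, ‖v.coeff g₀‖ :=
        Finset.sum_le_sum fun i _ => hmax _ (Finset.mem_univ _)
      have h5 : (∑ _i ∈ I, ‖v.coeff g₀‖) = I.card * ‖v.coeff g₀‖ := by
        rw [Finset.sum_const, nsmul_eq_mul]
      calc (N : ℝ) * ‖v.coeff g₀‖ = ‖(N : ℂ) * v.coeff g₀‖ := h2.symm
        _ = ‖∑ i ∈ I, v.coeff (Equiv.swap i k * g₀)‖ := by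
            rw [h1, norm_neg]
        _ ≤ ∑ i ∈ I, ‖v.coeff (Equiv.swap i k * g₀)‖ := h3
        _ ≤ I.card * ‖v.coeff g₀‖ := h4.trans_eq h5
        _ ≤ (n : ℝ) * ‖v.coeff g₀‖ := by
            have : (I.card : ℝ) ≤ (n : ℝ) := by exact_mod_cast hInz
            exact mul_le_mul_of_nonneg_right this (norm_nonneg _)
    have hzero : ‖v.coeff g₀‖ = 0 := by
      by_contra h
      have hpos : 0 < ‖v.coeff g₀‖ :=
        lt_of_le_of_ne (norm_nonneg _) (Ne.symm h)
      have : (N : ℝ) ≤ (n : ℝ) := le_of_mul_le_mul_right key hpos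
      have : N ≤ n := by exact_mod_cast this
      omega
    rw [← MonoidAlgebra.coeff_eq_zero]
    ext g
    have h6 : ‖v.coeff g‖ = 0 :=
      le_antisymm (by simpa [hzero] using hmax g (Finset.mem_univ g)) (norm_nonneg _)
    simpa using norm_eq_zero.mp h6
  have hinj' : Function.Injective (LinearMap.mulLeft ℂ a) := by
    intro x y h
    simp only [LinearMap.mulLeft_apply] at h
    have := hinj (x - y) (by rw [mul_sub, h, sub_self])
    exact sub_eq_zero.mp this
  have hsurj := (LinearMap.injective_iff_surjective
    (f := LinearMap.mulLeft ℂ a)).mp hinj'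
  obtain ⟨b, hb⟩ := hsurj 1
  simp only [LinearMap.mulLeft_apply] at hb
  have hba : b * a = 1 := by
    apply hinj'
    simp only [LinearMap.mulLeft_apply]
    rw [← mul_assoc, hb, one_mul, mul_one]
  exact ⟨⟨a, b, hb, hba⟩, rfl⟩

lemma isUnit_single_one {n : ℕ} {c : ℂ} (hc : c ≠ 0) :
    IsUnit (MonoidAlgebra.single (1 : Perm (Fin n)) c) := by
  have h1 : MonoidAlgebra.single (1 : Perm (Fin n)) c * MonoidAlgebra.single 1 c⁻¹ = 1 := by
    rw [MonoidAlgebra.single_mul_single, one_mul, mul_inv_cancel₀ hc, ← MonoidAlgebra.one_def]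
  have h2 : MonoidAlgebra.single (1 : Perm (Fin n)) c⁻¹ * MonoidAlgebra.single 1 c = 1 := by
    rw [MonoidAlgebra.single_mul_single, one_mul, inv_mul_cancel₀ hc, ← MonoidAlgebra.one_def]
  exact ⟨⟨_, _, h1, h2⟩, rfl⟩

/-- For `N > n`, the element `Φ^N = Σ_{σ ∈ S_n} N^{♯σ}·σ` of the group algebra
`ℂ[S_n]` is invertible. -/
theorem phi_isUnit (n N : ℕ) (hN : N > n) :
    IsUnit (∑ σ : Equiv.Perm (Fin n),
      MonoidAlgebra.single (R := ℂ) σ ((N : ℂ) ^ cycleCount σ)) := by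
  have hNne : (N : ℂ) ≠ 0 := Nat.cast_ne_zero.2 (by omega)
  have main : ∀ m, m ≤ n → IsUnit (Pel n N m) := by
    intro m
    induction m with
    | zero =>
      intro _
      have hS0 : Sset n 0 = {1} := by
        ext σ
        simp only [mem_Sset, Finset.mem_singleton]
        constructor
        · intro h
          exact Equiv.ext fun x => h x (Nat.zero_le _)
        · rintro rfl x _
          rfl
      rw [Pel, hS0, Finset.sum_singleton]
      exact isUnit_single_one (pow_ne_zero _ hNne)
    | succ m ih =>
      intro hm1
      have hm : m < n := hm1
      have h1 := key_step n N m hm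
      have h2 := isUnit_factor n N m hm hN
      have h3 : IsUnit (MonoidAlgebra.single (1 : Perm (Fin n)) (N : ℂ) * Pel n N (m + 1)) := by
        rw [← h1]
        exact (ih (le_of_lt hm)).mul h2
      have hs := isUnit_single_one (n := n) hNne
      have heq : Pel n N (m + 1)
          = ↑hs.unit⁻¹ * (MonoidAlgebra.single (1 : Perm (Fin n)) (N : ℂ) * Pel n N (m + 1)) := by
        rw [← mul_assoc, IsUnit.val_inv_mul, one_mul]
      rw [heq]
      exact (hs.unit⁻¹.isUnit).mul h3
  have hSn : Sset n n = univ := by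
    ext σ
    simp only [mem_Sset, Finset.mem_univ, iff_true]
    intro x hx
    exact absurd hx (Nat.not_le.2 x.isLt)
  have hPn : Pel n N n
      = ∑ σ : Equiv.Perm (Fin n), MonoidAlgebra.single (R := ℂ) σ ((N : ℂ) ^ cycleCount σ) := by
    rw [Pel, hSn]
  exact hPn ▸ main n le_rfl
end

section
/- For n < N, the n! functions χ_σ : (M_N(ℂ))ⁿ → ℂ defined by χ_σ(A₁,…,Aₙ) = Σ_{i₁,…,iₙ=1}^N (A₁)_{i₁ σ(i₁)} (A₂)_{i₂ σ(i₂)} ⋯ (Aₙ)_{iₙ σ(iₙ)}, for σ ∈ S_n, are linearly independent. -/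
/-- For `σ ∈ S_n`, the invariant function
`χ_σ(A₁,…,Aₙ) = Σ_{i₁,…,iₙ} (A₁)_{i₁σ(i₁)}⋯(Aₙ)_{iₙσ(iₙ)}` on `(M_N(ℂ))ⁿ`. -/
noncomputable def chi {n N : ℕ} (σ : Equiv.Perm (Fin n)) :
    (Fin n → Matrix (Fin N) (Fin N) ℂ) → ℂ :=
  fun A => ∑ i : Fin n → Fin N, ∏ t : Fin n, A t (i t) (i (σ t))

lemma chi_eval {n N : ℕ} (e : Fin n → Fin N) (he : Function.Injective e)
    (σ τ : Equiv.Perm (Fin n)) :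
    chi (N := N) σ (fun t => Matrix.single (e t) (e (τ t)) (1:ℂ)) =
      if σ = τ then 1 else 0 := by
  unfold chi
  have key : ∀ i : Fin n → Fin N,
      (∏ t, Matrix.single (e t) (e (τ t)) (1:ℂ) (i t) (i (σ t)))
        = if i = e ∧ σ = τ then 1 else 0 := by
    intro i
    simp only [Matrix.single, Matrix.of_apply]
    rw [Finset.prod_boole]
    congr 1
    simp only [eq_iff_iff, Finset.mem_univ, forall_true_left]
    constructor
    · intro hall
      have hie : i = e := by
        funext t
        exact ((hall t).1).symm
      refine ⟨hie, Equiv.ext fun t => (he ?_).symm⟩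
      have := (hall t).2
      rw [hie] at this
      exact this
    · rintro ⟨rfl, rfl⟩ t
      exact ⟨rfl, rfl⟩
  rw [Finset.sum_congr rfl (fun i _ => key i)]
  by_cases hστ : σ = τ
  · simp [hστ]
  · simp [hστ]

/-- For `n < N`, the `n!` functions `χ_σ`, `σ ∈ S_n`, are linearly independent. -/
theorem chi_linearIndependent (n N : ℕ) (h : n < N) :
    LinearIndependent ℂ (fun σ : Equiv.Perm (Fin n) => (chi (N := N) σ)) := by
  rw [Fintype.linearIndependent_iff]
  intro g hg τ
  have he : Function.Injective (Fin.castLE h.le) := Fin.castLE_injective h.le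
  have := congrFun hg (fun t => Matrix.single (Fin.castLE h.le t)
      (Fin.castLE h.le (τ t)) (1:ℂ))
  simpa [Finset.sum_apply, chi_eval _ he] using this
end

section
/- With respect to the Gaussian measure dμ = C e^{−Tr(A₁*A₁) − ⋯ − Tr(Aₙ*Aₙ)} on (M_N(ℂ))ⁿ normalized so that each matrix entry function has L² norm 1 (equivalently, all entries of all matrices are i.i.d. standard complex Gaussians), the inner product of the invariant functions satisfies ⟨χ_σ, χ_μ⟩ = N^{♯(σ⁻¹μ)} for all σ, μ ∈ S_n. -/
set_option maxHeartbeats 1000000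

open MeasureTheory ProbabilityTheory

/-- The standard complex Gaussian measure on `ℂ` (mean `0`, `E[|z|²] = 1`,
`E[z²] = 0`): the law of `x + iy` with `x, y` independent real Gaussians of
variance `1/2`. -/
noncomputable def stdComplexGaussian : Measure ℂ :=
  ((gaussianReal 0 (1 / 2)).prod (gaussianReal 0 (1 / 2))).map
    Complex.measurableEquivRealProd.symm

instance : IsProbabilityMeasure stdComplexGaussian :=
  Measure.isProbabilityMeasure_map Complex.measurableEquivRealProd.symm.measurable.aemeasurable

/-- The Gaussian measure on `(M_N(ℂ))ⁿ` whose matrix entries are i.i.d. standard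
complex Gaussians; a point is a function `(t, i, j) ↦ (A_t)_{ij}`. -/
noncomputable def gaussianMatrixMeasure (n N : ℕ) :
    Measure ((Fin n × Fin N × Fin N) → ℂ) :=
  Measure.pi fun _ => stdComplexGaussian

/-- `χ_σ(A₁,…,Aₙ) = Σ_{i₁,…,iₙ} (A₁)_{i₁σ(i₁)}⋯(Aₙ)_{iₙσ(iₙ)}`, as a function of
the family of matrix entries. -/
noncomputable def chiE {n N : ℕ} (σ : Equiv.Perm (Fin n))
    (a : (Fin n × Fin N × Fin N) → ℂ) : ℂ :=
  ∑ i : Fin n → Fin N, ∏ t : Fin n, a (t, i t, i (σ t))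

namespace ChiAux

variable {α : Type*} [MeasurableSpace α] (μ : Measure α) [SigmaFinite μ]

theorem integrable_pi_fin {n : ℕ} (f : Fin n → α → ℂ) (hf : ∀ i, Integrable (f i) μ) :
    Integrable (fun x : Fin n → α => ∏ i, f i (x i)) (Measure.pi fun _ => μ) := by
  induction n with
  | zero =>
    simp only [Finset.univ_eq_empty, Finset.prod_empty]
    have : IsFiniteMeasure (Measure.pi fun _ : Fin 0 => μ) := by
      constructor
      simp [Measure.pi_univ]
    exact integrable_const _
  | succ n ih =>
    have h := (measurePreserving_piFinSuccAbove (fun _ : Fin (n + 1) => μ) 0).symm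
    rw [← h.integrable_comp_emb (MeasurableEquiv.measurableEmbedding _)]
    simp_rw [MeasurableEquiv.piFinSuccAbove_symm_apply, Fin.insertNthEquiv,
      Fin.prod_univ_succ, Fin.insertNth_zero]
    simp only [Fin.zero_succAbove, cast_eq, Function.comp_def, Equiv.coe_fn_mk,
      Fin.cons_zero, Fin.cons_succ]
    exact (hf 0).mul_prod (ih (fun i => f i.succ) (fun i => hf i.succ))

theorem integral_pi_fin {n : ℕ} (f : Fin n → α → ℂ) :
    (∫ x : Fin n → α, ∏ i, f i (x i) ∂(Measure.pi fun _ => μ)) = ∏ i, ∫ x, f i x ∂μ := by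
  induction n with
  | zero => simp [Measure.pi_of_empty (fun _ : Fin 0 => μ)]
  | succ n ih =>
    have h := (measurePreserving_piFinSuccAbove (fun _ : Fin (n + 1) => μ) 0).symm
    rw [← h.integral_comp']
    simp_rw [MeasurableEquiv.piFinSuccAbove_symm_apply, Fin.insertNthEquiv,
      Fin.prod_univ_succ, Fin.insertNth_zero]
    simp only [Fin.zero_succAbove, cast_eq, Function.comp_def, Equiv.coe_fn_mk,
      Fin.cons_zero, Fin.cons_succ]
    rw [integral_prod_mul (μ := μ) (f := f 0)
      (fun y : Fin n → α => ∏ i : Fin n, f i.succ (y i)), ih]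

theorem integrable_pi {ι : Type*} [Fintype ι] (f : ι → α → ℂ) (hf : ∀ i, Integrable (f i) μ) :
    Integrable (fun x : ι → α => ∏ i, f i (x i)) (Measure.pi fun _ => μ) := by
  let e := (Fintype.equivFin ι).symm
  have h := measurePreserving_piCongrLeft (fun _ : ι => μ) e
  rw [← h.integrable_comp_emb (MeasurableEquiv.measurableEmbedding _)]
  simp_rw [Function.comp_def, MeasurableEquiv.coe_piCongrLeft, ← e.prod_comp,
    Equiv.piCongrLeft_apply_apply]
  exact integrable_pi_fin μ _ (fun j => hf _)

theorem integral_pi {ι : Type*} [Fintype ι] (f : ι → α → ℂ) :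
    (∫ x : ι → α, ∏ i, f i (x i) ∂(Measure.pi fun _ => μ)) = ∏ i, ∫ x, f i x ∂μ := by
  let e := (Fintype.equivFin ι).symm
  have h := measurePreserving_piCongrLeft (fun _ : ι => μ) e
  rw [← h.integral_comp']
  simp_rw [MeasurableEquiv.coe_piCongrLeft, ← e.prod_comp,
    Equiv.piCongrLeft_apply_apply]
  rw [integral_pi_fin μ _]


section Moments

open Real

noncomputable def G : Measure ℝ := gaussianReal 0 (1/2)

instance : IsProbabilityMeasure G :=
  inferInstanceAs (IsProbabilityMeasure (gaussianReal 0 (1/2)))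

lemma half_ne : (1/2 : NNReal) ≠ 0 := by norm_num

lemma G_eq : G = volume.withDensity fun x => ((gaussianPDFReal 0 (1/2) x).toNNReal : ENNReal) := by
  rw [G, gaussianReal_of_var_ne_zero 0 half_ne]
  rfl

lemma pdf_eq (x : ℝ) : gaussianPDFReal 0 (1/2) x = (Real.sqrt π)⁻¹ * Real.exp (-x^2) := by
  rw [gaussianPDFReal]
  have h2 : Real.sqrt 2 ≠ 0 := by positivity
  have hp : Real.sqrt π ≠ 0 := by positivity
  norm_num
  field_simp

lemma pdf_meas : Measurable fun x => (gaussianPDFReal 0 (1/2) x).toNNReal :=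
  (measurable_gaussianPDFReal 0 (1/2)).real_toNNReal

lemma G_integral (f : ℝ → ℝ) :
    ∫ x, f x ∂G = (Real.sqrt π)⁻¹ * ∫ x, Real.exp (-x^2) * f x := by
  rw [G_eq, integral_withDensity_eq_integral_smul pdf_meas]
  simp_rw [NNReal.smul_def, Real.coe_toNNReal _ (gaussianPDFReal_nonneg 0 (1/2) _), pdf_eq,
    smul_eq_mul, mul_assoc, integral_const_mul]

lemma G_integrable (f : ℝ → ℝ) (h : Integrable (fun x => Real.exp (-x^2) * f x)) :
    Integrable f G := by
  rw [G_eq, integrable_withDensity_iff_integrable_smul pdf_meas]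
  simp_rw [NNReal.smul_def, Real.coe_toNNReal _ (gaussianPDFReal_nonneg 0 (1/2) _), pdf_eq,
    smul_eq_mul, mul_assoc]
  exact h.const_mul _

lemma G_integrable_id : Integrable (fun x => x) G := by
  apply G_integrable
  simp_rw [mul_comm]
  simpa using integrable_mul_exp_neg_mul_sq (b := 1) one_pos

lemma G_integrable_sq : Integrable (fun x => x^2) G := by
  apply G_integrable
  simp_rw [mul_comm]
  have := integrable_rpow_mul_exp_neg_mul_sq (b := 1) one_pos (s := 2) (by norm_num)
  simpa [Real.rpow_natCast] using this

lemma G_integral_id : ∫ x, x ∂G = 0 := by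
  rw [G_integral]
  have key : (∫ x : ℝ, Real.exp (-x^2) * x) = 0 := by
    have h := MeasureTheory.integral_neg_eq_self (fun x : ℝ => Real.exp (-x^2) * x) volume
    simp only [neg_sq, mul_neg, integral_neg] at h
    linarith [h]
  rw [key, mul_zero]

lemma G_integral_sq : ∫ x, x^2 ∂G = 1/2 := by
  rw [G_integral]
  have h1 : (∫ x : ℝ, Real.exp (-x^2) * x^2) = Real.sqrt π / 2 := by
    have heq : (fun x : ℝ => Real.exp (-x^2) * x^2)
        = fun x : ℝ => |x| ^ (2:ℝ) * Real.exp (-|x| ^ (2:ℝ)) := by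
      have h2 : ∀ y : ℝ, y ^ (2:ℝ) = y ^ 2 := fun y => by
        rw [show (2:ℝ) = ((2:ℕ):ℝ) by norm_num, Real.rpow_natCast]
      funext x
      simp only [h2, sq_abs]
      ring
    rw [heq]
    rw [integral_comp_abs (f := fun x => x ^ (2:ℝ) * Real.exp (-x ^ (2:ℝ)))]
    rw [integral_rpow_mul_exp_neg_rpow (by norm_num) (by norm_num)]
    have : ((2:ℝ) + 1)/2 = 1/2 + 1 := by norm_num
    rw [this, Real.Gamma_add_one (by norm_num), Real.Gamma_one_half_eq]
    ring
  rw [h1]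
  have : Real.sqrt π ≠ 0 := by positivity
  field_simp


end Moments

lemma std_eq : stdComplexGaussian = (G.prod G).map Complex.measurableEquivRealProd.symm := rfl

lemma symm_apply (p : ℝ × ℝ) :
    (Complex.measurableEquivRealProd.symm p : ℂ) = (p.1 : ℂ) + (p.2 : ℂ) * Complex.I := by
  simp [Complex.ext_iff, Complex.measurableEquivRealProd]

lemma intgStd (f : ℂ → ℂ)
    (h : Integrable (fun p : ℝ × ℝ => f ((p.1 : ℂ) + (p.2 : ℂ) * Complex.I)) (G.prod G)) :
    Integrable f stdComplexGaussian := by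
  rw [std_eq,
    (Complex.measurableEquivRealProd.symm.measurableEmbedding).integrable_map_iff]
  have he : (f ∘ ⇑Complex.measurableEquivRealProd.symm)
      = fun p : ℝ × ℝ => f ((p.1 : ℂ) + (p.2 : ℂ) * Complex.I) := by
    funext p; rw [Function.comp_apply, symm_apply]
  rw [he]; exact h

lemma intStd (f : ℂ → ℂ) :
    ∫ z, f z ∂stdComplexGaussian
      = ∫ p : ℝ × ℝ, f ((p.1 : ℂ) + (p.2 : ℂ) * Complex.I) ∂(G.prod G) := by
  rw [std_eq, integral_map_equiv]
  simp_rw [symm_apply]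

lemma intgStd_id : Integrable (fun z : ℂ => z) stdComplexGaussian := by
  apply intgStd
  have hA : Integrable (fun p : ℝ × ℝ => ((p.1 : ℂ)) * 1) (G.prod G) :=
    G_integrable_id.ofReal.mul_prod (integrable_const (1:ℂ))
  have hB : Integrable (fun p : ℝ × ℝ => (1 : ℂ) * ((p.2 : ℂ) * Complex.I)) (G.prod G) :=
    (integrable_const 1).mul_prod (G_integrable_id.ofReal.mul_const Complex.I)
  exact (hA.add hB).congr (Filter.Eventually.of_forall fun p => by simp)

lemma intStd_id : ∫ z, z ∂stdComplexGaussian = 0 := by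
  rw [intStd]
  have hA : Integrable (fun p : ℝ × ℝ => ((p.1 : ℂ)) * 1) (G.prod G) :=
    G_integrable_id.ofReal.mul_prod (integrable_const (1:ℂ))
  have hB : Integrable (fun p : ℝ × ℝ => (1 : ℂ) * ((p.2 : ℂ) * Complex.I)) (G.prod G) :=
    (integrable_const 1).mul_prod (G_integrable_id.ofReal.mul_const Complex.I)
  have : (fun p : ℝ × ℝ => (p.1 : ℂ) + (p.2 : ℂ) * Complex.I)
      = fun p => ((p.1 : ℂ)) * 1 + (1 : ℂ) * ((p.2 : ℂ) * Complex.I) := by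
    funext p; ring
  rw [this, integral_add hA hB,
    integral_prod_mul (fun x : ℝ => (x:ℂ)) (fun _ : ℝ => (1:ℂ)),
    integral_prod_mul (fun _ : ℝ => (1:ℂ)) (fun y : ℝ => (y:ℂ) * Complex.I)]
  have e1 : ∫ x, (x:ℂ) ∂G = ((∫ x, x ∂G : ℝ) : ℂ) := integral_ofReal
  rw [integral_mul_const, e1, G_integral_id]
  simp

lemma intgStd_conj : Integrable (fun z : ℂ => (starRingEnd ℂ) z) stdComplexGaussian := by
  apply intgStd
  have hA : Integrable (fun p : ℝ × ℝ => ((p.1 : ℂ)) * 1) (G.prod G) :=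
    G_integrable_id.ofReal.mul_prod (integrable_const (1:ℂ))
  have hB : Integrable (fun p : ℝ × ℝ => (1 : ℂ) * ((p.2 : ℂ) * (-Complex.I))) (G.prod G) :=
    (integrable_const 1).mul_prod (G_integrable_id.ofReal.mul_const (-Complex.I))
  have : (fun p : ℝ × ℝ => (starRingEnd ℂ) ((p.1 : ℂ) + (p.2 : ℂ) * Complex.I))
      = fun p => ((p.1 : ℂ)) * 1 + (1 : ℂ) * ((p.2 : ℂ) * (-Complex.I)) := by
    funext p
    simp [map_add, map_mul, Complex.conj_ofReal, Complex.conj_I]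
  rw [this]
  exact hA.add hB

lemma intStd_conj : ∫ z, (starRingEnd ℂ) z ∂stdComplexGaussian = 0 := by
  rw [integral_conj, intStd_id, map_zero]

lemma intgStd_mul_conj :
    Integrable (fun z : ℂ => z * (starRingEnd ℂ) z) stdComplexGaussian := by
  apply intgStd
  have hA : Integrable (fun p : ℝ × ℝ => ((p.1 ^ 2 : ℝ) : ℂ) * 1) (G.prod G) :=
    G_integrable_sq.ofReal.mul_prod (integrable_const (1:ℂ))
  have hB : Integrable (fun p : ℝ × ℝ => (1 : ℂ) * ((p.2 ^ 2 : ℝ) : ℂ)) (G.prod G) :=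
    (integrable_const (1:ℂ)).mul_prod G_integrable_sq.ofReal
  have : (fun p : ℝ × ℝ => ((p.1 : ℂ) + (p.2 : ℂ) * Complex.I)
      * (starRingEnd ℂ) ((p.1 : ℂ) + (p.2 : ℂ) * Complex.I))
      = fun p => ((p.1 ^ 2 : ℝ) : ℂ) * 1 + (1 : ℂ) * ((p.2 ^ 2 : ℝ) : ℂ) := by
    funext p
    rw [Complex.mul_conj, Complex.normSq_add_mul_I]
    push_cast
    ring
  rw [this]
  exact hA.add hB

lemma intStd_mul_conj : ∫ z, z * (starRingEnd ℂ) z ∂stdComplexGaussian = 1 := by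
  rw [intStd]
  have hA : Integrable (fun p : ℝ × ℝ => ((p.1 ^ 2 : ℝ) : ℂ) * 1) (G.prod G) :=
    G_integrable_sq.ofReal.mul_prod (integrable_const (1:ℂ))
  have hB : Integrable (fun p : ℝ × ℝ => (1 : ℂ) * ((p.2 ^ 2 : ℝ) : ℂ)) (G.prod G) :=
    (integrable_const (1:ℂ)).mul_prod G_integrable_sq.ofReal
  have : (fun p : ℝ × ℝ => ((p.1 : ℂ) + (p.2 : ℂ) * Complex.I)
      * (starRingEnd ℂ) ((p.1 : ℂ) + (p.2 : ℂ) * Complex.I))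
      = fun p => ((p.1 ^ 2 : ℝ) : ℂ) * 1 + (1 : ℂ) * ((p.2 ^ 2 : ℝ) : ℂ) := by
    funext p
    rw [Complex.mul_conj, Complex.normSq_add_mul_I]
    push_cast
    ring
  rw [this, integral_add hA hB,
    integral_prod_mul (fun x : ℝ => ((x^2 : ℝ) : ℂ)) (fun _ : ℝ => (1:ℂ)),
    integral_prod_mul (fun _ : ℝ => (1:ℂ)) (fun y : ℝ => ((y^2 : ℝ) : ℂ))]
  have e1 : ∫ x, ((x^2:ℝ):ℂ) ∂G = ((∫ x, x^2 ∂G : ℝ) : ℂ) := integral_ofReal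
  rw [e1, G_integral_sq]
  simp only [integral_const, measure_univ, ENNReal.toReal_one, one_smul, one_mul, mul_one]
  norm_num

lemma intStd_one : ∫ _ : ℂ, (1:ℂ) ∂stdComplexGaussian = 1 := by
  simp


def scSetoid (π : Equiv.Perm (Fin n)) : Setoid (Fin n) :=
  ⟨π.SameCycle, ⟨fun x => Equiv.Perm.SameCycle.refl π x, fun h => h.symm, fun h h' => h.trans h'⟩⟩

lemma invariant_of_fixed {π : Equiv.Perm (Fin n)} {i : Fin n → Fin N}
    (hi : ∀ s, i (π s) = i s) {a b : Fin n} (h : π.SameCycle a b) : i a = i b := by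
  obtain ⟨k, hk⟩ := h
  have key : ∀ (m : ℕ) (a : Fin n), i ((π ^ m) a) = i a := by
    intro m
    induction m with
    | zero => simp
    | succ m ih =>
      intro a
      rw [pow_succ', Equiv.Perm.mul_apply, hi, ih]
  subst hk
  induction k using Int.rec with
  | ofNat m => rw [Int.ofNat_eq_coe, zpow_natCast, key]
  | negSucc m =>
    have : (π ^ (m + 1 : ℕ)) ((π ^ Int.negSucc m) a) = a := by
      rw [← zpow_natCast, ← Equiv.Perm.mul_apply, ← zpow_add]
      have h0 : ((m + 1 : ℕ) : ℤ) + Int.negSucc m = 0 := by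
        simp [Int.negSucc_eq]
      rw [h0]
      simp
    conv_lhs => rw [← this, key]

def fixedEquiv (π : Equiv.Perm (Fin n)) :
    {i : Fin n → Fin N // ∀ s, i (π s) = i s} ≃ (Quotient (scSetoid π) → Fin N) where
  toFun i := Quotient.lift i.1 (fun _ _ h => invariant_of_fixed i.2 h)
  invFun f := ⟨fun s => f ⟦s⟧, fun s => congrArg f (Quotient.sound (⟨-1, by simp⟩ :
    (scSetoid π).r (π s) s))⟩
  left_inv i := Subtype.ext (funext fun _ => rfl)
  right_inv f := funext fun q => Quotient.inductionOn q (fun _ => rfl)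

def cyclePoint (π : Equiv.Perm (Fin n)) (x : Fin n) :
    ({c // c ∈ π.cycleFactorsFinset} ⊕ {x : Fin n // x ∉ π.support}) :=
  if hx : x ∈ π.support
    then Sum.inl ⟨π.cycleOf x, Equiv.Perm.cycleOf_mem_cycleFactorsFinset_iff.2 hx⟩
    else Sum.inr ⟨x, hx⟩

lemma cyclePoint_resp (π : Equiv.Perm (Fin n)) (a b : Fin n) (h : (scSetoid π).r a b) :
    cyclePoint π a = cyclePoint π b := by
  change π.SameCycle a b at h
  unfold cyclePoint
  by_cases ha : a ∈ π.support
  · have hb : b ∈ π.support := by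
      by_contra hb
      obtain ⟨k, hk⟩ := h.symm
      rw [Equiv.Perm.zpow_apply_eq_self_of_apply_eq_self
        (Equiv.Perm.notMem_support.1 hb)] at hk
      subst hk
      exact hb ha
    rw [dif_pos ha, dif_pos hb]
    exact congrArg Sum.inl (Subtype.ext (h.cycleOf_eq))
  · have hab : a = b := by
      obtain ⟨k, hk⟩ := h
      rwa [Equiv.Perm.zpow_apply_eq_self_of_apply_eq_self
        (Equiv.Perm.notMem_support.1 ha)] at hk
    subst hab
    rfl

noncomputable def quotEquiv (π : Equiv.Perm (Fin n)) :
    Quotient (scSetoid π) ≃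
      ({c // c ∈ π.cycleFactorsFinset} ⊕ {x : Fin n // x ∉ π.support}) := by
  refine Equiv.ofBijective (Quotient.lift (cyclePoint π) (cyclePoint_resp π)) ⟨?_, ?_⟩
  · intro qa qb
    refine Quotient.inductionOn₂ qa qb (fun a b heq => ?_)
    simp only [Quotient.lift_mk] at heq
    unfold cyclePoint at heq
    by_cases ha : a ∈ π.support <;> by_cases hb : b ∈ π.support
    · rw [dif_pos ha, dif_pos hb] at heq
      have hco : π.cycleOf a = π.cycleOf b := congrArg Subtype.val (Sum.inl.inj heq)
      apply Quotient.sound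
      have hbb : b ∈ (π.cycleOf b).support :=
        Equiv.Perm.mem_support_cycleOf_iff.2 ⟨Equiv.Perm.SameCycle.refl π b, hb⟩
      rw [← hco] at hbb
      exact (Equiv.Perm.mem_support_cycleOf_iff.1 hbb).1
    · rw [dif_pos ha, dif_neg hb] at heq; exact absurd heq (by simp)
    · rw [dif_neg ha, dif_pos hb] at heq; exact absurd heq (by simp)
    · rw [dif_neg ha, dif_neg hb] at heq
      have hab : a = b := congrArg Subtype.val (Sum.inr.inj heq)
      subst hab
      exact Quotient.sound (Equiv.Perm.SameCycle.refl π a)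
  · rintro (⟨c, hc⟩ | ⟨x, hx⟩)
    · obtain ⟨x, hxc⟩ := (Equiv.Perm.mem_cycleFactorsFinset_iff.1 hc).1.nonempty_support
      have hxs : x ∈ π.support := Equiv.Perm.mem_cycleFactorsFinset_support_le hc hxc
      refine ⟨⟦x⟧, ?_⟩
      simp only [Quotient.lift_mk]
      unfold cyclePoint
      rw [dif_pos hxs]
      exact congrArg Sum.inl (Subtype.ext (Equiv.Perm.cycle_is_cycleOf hxc hc).symm)
    · refine ⟨⟦x⟧, ?_⟩
      simp only [Quotient.lift_mk]
      unfold cyclePoint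
      rw [dif_neg hx]

lemma card_fixed (π : Equiv.Perm (Fin n))
    [DecidablePred fun i : Fin n → Fin N => ∀ s, i (π s) = i s] :
    (Finset.univ.filter fun i : Fin n → Fin N => ∀ s, i (π s) = i s).card
      = N ^ cycleCount π := by
  classical
  haveI : Fintype (Quotient (scSetoid π)) := Fintype.ofEquiv _ (quotEquiv π).symm
  rw [← Fintype.card_subtype]
  rw [Fintype.card_congr (fixedEquiv (N := N) π)]
  rw [Fintype.card_fun]
  congr 1
  · exact Fintype.card_fin N
  rw [Fintype.card_congr (quotEquiv π), Fintype.card_sum, Fintype.card_coe,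
    cycleCount, Equiv.Perm.cycleType_def, Multiset.card_map, Fintype.card_subtype_compl,
    Fintype.card_coe, Fintype.card_fin]
  rfl

lemma cycleCount_inv (π : Equiv.Perm (Fin n)) : cycleCount π⁻¹ = cycleCount π := by
  rw [cycleCount, cycleCount, Equiv.Perm.cycleType_inv, Equiv.Perm.support_inv]

lemma cycleCount_conj (g π : Equiv.Perm (Fin n)) :
    cycleCount (g * π * g⁻¹) = cycleCount π := by
  rw [cycleCount, cycleCount, Equiv.Perm.cycleType_conj, Equiv.Perm.support_conj,
    Finset.card_map]

lemma cycleCount_key (σ μ : Equiv.Perm (Fin n)) :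
    cycleCount (σ * μ⁻¹) = cycleCount (σ⁻¹ * μ) := by
  have : σ * μ⁻¹ = σ * (σ⁻¹ * μ)⁻¹ * σ⁻¹ := by group
  rw [this, cycleCount_conj, cycleCount_inv]



section Main

variable {n N : ℕ}

noncomputable def F (σ μ : Equiv.Perm (Fin n)) (i j : Fin n → Fin N)
    (k : Fin n × Fin N × Fin N) (z : ℂ) : ℂ :=
  (if k.2 = (i k.1, i (σ k.1)) then z else 1) *
    (if k.2 = (j k.1, j (μ k.1)) then (starRingEnd ℂ) z else 1)

lemma F_integrable (σ μ : Equiv.Perm (Fin n)) (i j : Fin n → Fin N)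
    (k : Fin n × Fin N × Fin N) : Integrable (F σ μ i j k) stdComplexGaussian := by
  by_cases h1 : k.2 = (i k.1, i (σ k.1)) <;> by_cases h2 : k.2 = (j k.1, j (μ k.1))
  · have hF : F σ μ i j k = fun z => z * (starRingEnd ℂ) z := by
      funext z; rw [F, if_pos h1, if_pos h2]
    rw [hF]; exact intgStd_mul_conj
  · have hF : F σ μ i j k = fun z => z := by
      funext z; rw [F, if_pos h1, if_neg h2, mul_one]
    rw [hF]; exact intgStd_id
  · have hF : F σ μ i j k = fun z => (starRingEnd ℂ) z := by
      funext z; rw [F, if_neg h1, if_pos h2, one_mul]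
    rw [hF]; exact intgStd_conj
  · have hF : F σ μ i j k = fun _ => (1 : ℂ) := by
      funext z; rw [F, if_neg h1, if_neg h2, mul_one]
    rw [hF]; exact integrable_const 1

lemma F_prod_one {σ μ : Equiv.Perm (Fin n)} {i j : Fin n → Fin N}
    (h : ∀ t, (i t, i (σ t)) = (j t, j (μ t))) :
    (∏ k : Fin n × Fin N × Fin N, ∫ z, F σ μ i j k z ∂stdComplexGaussian) = 1 := by
  apply Finset.prod_eq_one
  intro k _
  by_cases hk : k.2 = (i k.1, i (σ k.1))
  · have hk2 : k.2 = (j k.1, j (μ k.1)) := by rw [hk, h k.1]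
    have hF : F σ μ i j k = fun z => z * (starRingEnd ℂ) z := by
      funext z; rw [F, if_pos hk, if_pos hk2]
    rw [hF]; exact intStd_mul_conj
  · have hk2 : k.2 ≠ (j k.1, j (μ k.1)) := by rw [← h k.1]; exact hk
    have hF : F σ μ i j k = fun _ => (1 : ℂ) := by
      funext z; rw [F, if_neg hk, if_neg hk2, mul_one]
    rw [hF]
    simp

lemma F_prod_zero {σ μ : Equiv.Perm (Fin n)} {i j : Fin n → Fin N}
    (h : ¬ ∀ t, (i t, i (σ t)) = (j t, j (μ t))) :
    (∏ k : Fin n × Fin N × Fin N, ∫ z, F σ μ i j k z ∂stdComplexGaussian) = 0 := by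
  push_neg at h
  obtain ⟨t, ht⟩ := h
  apply Finset.prod_eq_zero (Finset.mem_univ (t, i t, i (σ t)))
  have hF : F σ μ i j (t, i t, i (σ t)) = fun z => z := by
    funext z
    rw [F]
    exact (by rw [if_pos rfl, if_neg ht, mul_one] :
      (if ((t, i t, i (σ t)) : Fin n × Fin N × Fin N).2 = (i t, i (σ t)) then z else 1) *
        (if ((t, i t, i (σ t)) : Fin n × Fin N × Fin N).2 = (j t, j (μ t))
          then (starRingEnd ℂ) z else 1) = z)
  rw [hF]
  exact intStd_id

lemma prod_if (g : Fin n → Fin N × Fin N) (a : (Fin n × Fin N × Fin N) → ℂ) :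
    (∏ k : Fin n × Fin N × Fin N, if k.2 = g k.1 then a k else 1)
      = ∏ t, a (t, g t) := by
  rw [Fintype.prod_prod_type]
  refine Finset.prod_congr rfl (fun t _ => ?_)
  simpa using Finset.prod_ite_eq' (Finset.univ : Finset (Fin N × Fin N)) (g t)
    (fun y => a (t, y))

lemma chi_expand (σ μ : Equiv.Perm (Fin n)) (a : (Fin n × Fin N × Fin N) → ℂ) :
    chiE (N := N) σ a * (starRingEnd ℂ) (chiE (N := N) μ a)
      = ∑ i : Fin n → Fin N, ∑ j : Fin n → Fin N,
          ∏ k : Fin n × Fin N × Fin N, F σ μ i j k (a k) := by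
  rw [chiE, chiE, map_sum, Finset.sum_mul_sum]
  refine Finset.sum_congr rfl (fun i _ => Finset.sum_congr rfl (fun j _ => ?_))
  rw [map_prod]
  unfold F
  rw [Finset.prod_mul_distrib, prod_if (fun t => (i t, i (σ t))),
    prod_if (fun t => (j t, j (μ t)))]

end Main

end ChiAux

/-- With respect to the Gaussian measure on `(M_N(ℂ))ⁿ` whose entries are i.i.d.
standard complex Gaussians, `⟨χ_σ, χ_μ⟩ = N^{♯(σ⁻¹μ)}` for all `σ, μ ∈ S_n`. -/
theorem chi_inner_product (n N : ℕ) (σ μ : Equiv.Perm (Fin n)) :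
    ∫ a, chiE (N := N) σ a * (starRingEnd ℂ) (chiE (N := N) μ a)
        ∂(gaussianMatrixMeasure n N)
      = (N : ℂ) ^ cycleCount (σ⁻¹ * μ) := by
  classical
  open ChiAux in
  have hpi : gaussianMatrixMeasure n N
      = Measure.pi fun _ : Fin n × Fin N × Fin N => stdComplexGaussian := rfl
  have hint : ∀ (i j : Fin n → Fin N),
      Integrable (fun a : (Fin n × Fin N × Fin N) → ℂ =>
        ∏ k, ChiAux.F σ μ i j k (a k)) (gaussianMatrixMeasure n N) := by
    intro i j
    rw [hpi]
    exact ChiAux.integrable_pi stdComplexGaussian _ (ChiAux.F_integrable σ μ i j)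
  have step1 : ∫ a, chiE (N := N) σ a * (starRingEnd ℂ) (chiE (N := N) μ a)
        ∂(gaussianMatrixMeasure n N)
      = ∑ i : Fin n → Fin N, ∑ j : Fin n → Fin N,
          ∫ a, (∏ k, ChiAux.F σ μ i j k (a k)) ∂(gaussianMatrixMeasure n N) := by
    simp_rw [ChiAux.chi_expand σ μ]
    rw [integral_finset_sum _ (fun i _ => integrable_finset_sum _ (fun j _ => hint i j))]
    exact Finset.sum_congr rfl (fun i _ => integral_finset_sum _ (fun j _ => hint i j))
  have step2 : ∀ (i j : Fin n → Fin N),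
      (∫ a, (∏ k, ChiAux.F σ μ i j k (a k)) ∂(gaussianMatrixMeasure n N))
        = if (∀ t, (i t, i (σ t)) = (j t, j (μ t))) then (1:ℂ) else 0 := by
    intro i j
    rw [hpi, ChiAux.integral_pi stdComplexGaussian (ChiAux.F σ μ i j)]
    by_cases h : ∀ t, (i t, i (σ t)) = (j t, j (μ t))
    · rw [if_pos h]; exact ChiAux.F_prod_one h
    · rw [if_neg h]; exact ChiAux.F_prod_zero h
  rw [step1]
  simp_rw [step2]
  have hcond : ∀ (i j : Fin n → Fin N),
      (∀ t, (i t, i (σ t)) = (j t, j (μ t))) ↔ (j = i ∧ ∀ t, i (σ t) = i (μ t)) := by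
    intro i j
    constructor
    · intro h
      have hij : j = i := by
        funext t
        exact (Prod.ext_iff.1 (h t)).1.symm
      subst hij
      exact ⟨rfl, fun t => (Prod.ext_iff.1 (h t)).2⟩
    · rintro ⟨rfl, h⟩
      intro t
      exact Prod.ext_iff.2 ⟨rfl, h t⟩
  have hsum : ∀ i : Fin n → Fin N,
      (∑ j : Fin n → Fin N,
        if (∀ t, (i t, i (σ t)) = (j t, j (μ t))) then (1:ℂ) else 0)
      = if (∀ t, i (σ t) = i (μ t)) then (1:ℂ) else 0 := by
    intro i
    have : ∀ j : Fin n → Fin N,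
        (if (∀ t, (i t, i (σ t)) = (j t, j (μ t))) then (1:ℂ) else 0)
          = if j = i then (if (∀ t, i (σ t) = i (μ t)) then (1:ℂ) else 0) else 0 := by
      intro j
      by_cases hj : j = i
      · subst hj
        rw [if_pos rfl]
        by_cases hq : ∀ t, j (σ t) = j (μ t)
        · rw [if_pos hq, if_pos ((hcond j j).2 ⟨rfl, hq⟩)]
        · rw [if_neg hq, if_neg (fun h => hq ((hcond j j).1 h).2)]
      · rw [if_neg hj, if_neg (fun h => hj ((hcond i j).1 h).1)]
    simp_rw [this]
    rw [Finset.sum_ite_eq' Finset.univ i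
      (fun _ => if (∀ t, i (σ t) = i (μ t)) then (1:ℂ) else 0),
      if_pos (Finset.mem_univ i)]
  simp_rw [hsum]
  have hQ : ∀ i : Fin n → Fin N,
      (∀ t, i (σ t) = i (μ t)) ↔ (∀ s, i ((σ * μ⁻¹) s) = i s) := by
    intro i
    constructor
    · intro h s
      rw [Equiv.Perm.mul_apply]
      rw [h (μ⁻¹ s)]
      simp
    · intro h t
      have := h (μ t)
      rwa [Equiv.Perm.mul_apply, show μ⁻¹ (μ t) = t by simp] at this
  have hstep : (∑ i : Fin n → Fin N, if (∀ t, i (σ t) = i (μ t)) then (1:ℂ) else 0)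
      = ∑ i : Fin n → Fin N, if (∀ s, i ((σ * μ⁻¹) s) = i s) then (1:ℂ) else 0 :=
    Finset.sum_congr rfl (fun i _ => if_congr (hQ i) rfl rfl)
  rw [hstep, Finset.sum_boole]
  rw [ChiAux.card_fixed (σ * μ⁻¹)]
  rw [ChiAux.cycleCount_key σ μ]
  push_cast
  ring
end

section
/- For Haar measure on U(N), ∫_{U(N)} |Tr(U)|² dU = 1, where Tr denotes the non-normalized trace. -/
open MeasureTheory Matrix

noncomputable instance unitaryGroupMeasurableSpace (N : ℕ) :
    MeasurableSpace (Matrix.unitaryGroup (Fin N) ℂ) := borel _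

namespace TraceAbsSqAux

instance (N : ℕ) : BorelSpace (Matrix.unitaryGroup (Fin N) ℂ) := ⟨rfl⟩

variable {N : ℕ} {μ : Measure (Matrix.unitaryGroup (Fin N) ℂ)}

lemma continuous_E (i j : Fin N) :
    Continuous (fun U : Matrix.unitaryGroup (Fin N) ℂ => (U : Matrix (Fin N) (Fin N) ℂ) i j) :=
  (continuous_apply j).comp ((continuous_apply i).comp continuous_subtype_val)

lemma continuous_mulL (g : Matrix.unitaryGroup (Fin N) ℂ) :
    Continuous (fun U : Matrix.unitaryGroup (Fin N) ℂ => g * U) := by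
  fun_prop

lemma int_inv (hinv : ∀ g : Matrix.unitaryGroup (Fin N) ℂ, μ.map (fun U => g * U) = μ)
    (g : Matrix.unitaryGroup (Fin N) ℂ) (f : Matrix.unitaryGroup (Fin N) ℂ → ℂ)
    (hf : Continuous f) : ∫ U, f (g * U) ∂μ = ∫ U, f U ∂μ := by
  conv_rhs => rw [← hinv g]
  rw [integral_map (continuous_mulL g).measurable.aemeasurable hf.aestronglyMeasurable]

lemma perm_mem (σ : Equiv.Perm (Fin N)) : σ.permMatrix ℂ ∈ Matrix.unitaryGroup (Fin N) ℂ := by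
  rw [Matrix.mem_unitaryGroup_iff']
  have hstar : star (σ.permMatrix ℂ) = (σ⁻¹).permMatrix ℂ := by
    ext i j
    simp only [Matrix.star_eq_conjTranspose, Matrix.conjTranspose_apply,
      Equiv.Perm.permMatrix, PEquiv.toMatrix_apply, Equiv.toPEquiv_apply, Option.mem_some_iff,
      apply_ite (starRingEnd ℂ), _root_.map_one, _root_.map_zero]
    simp [eq_comm, Equiv.eq_symm_apply, Equiv.Perm.inv_def]
  rw [hstar, Equiv.Perm.permMatrix, PEquiv.toMatrix_toPEquiv_mul]
  ext i j
  simp [Equiv.Perm.permMatrix, PEquiv.toMatrix_apply, Equiv.toPEquiv_apply, Matrix.one_apply,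
    Equiv.apply_eq_iff_eq_symm_apply, eq_comm, Equiv.Perm.inv_def]

lemma sign_mem (i : Fin N) :
    Matrix.diagonal (fun k => if k = i then (-1 : ℂ) else 1) ∈ Matrix.unitaryGroup (Fin N) ℂ := by
  rw [Matrix.mem_unitaryGroup_iff']
  simp [Matrix.star_eq_conjTranspose, Matrix.diagonal_conjTranspose, Matrix.diagonal_mul_diagonal]
  ext k l
  by_cases h : k = i <;> simp [Matrix.diagonal_apply, h, Matrix.one_apply]

lemma col_sum (U : Matrix.unitaryGroup (Fin N) ℂ) (j : Fin N) :
    ∑ k, (U : Matrix (Fin N) (Fin N) ℂ) k j * (starRingEnd ℂ) ((U : Matrix (Fin N) (Fin N) ℂ) k j)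
      = 1 := by
  have h := Matrix.UnitaryGroup.star_mul_self U
  have h2 := congrArg (fun M => M j j) h
  simp only [Matrix.mul_apply, Matrix.one_apply_eq, Matrix.star_apply,
    Matrix.star_eq_conjTranspose, Matrix.conjTranspose_apply] at h2
  rw [← h2]
  exact Finset.sum_congr rfl fun k _ => (mul_comm _ _)

lemma norm_E_le (U : Matrix.unitaryGroup (Fin N) ℂ) (i j : Fin N) :
    ‖(U : Matrix (Fin N) (Fin N) ℂ) i j‖ ≤ 1 := by
  have h := Matrix.UnitaryGroup.star_mul_self U
  have h2 := congrArg (fun M => M j j) h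
  simp only [Matrix.mul_apply, Matrix.one_apply_eq, Matrix.star_apply, Matrix.star_eq_conjTranspose,
    Matrix.conjTranspose_apply] at h2
  have h3 : ∑ k, Complex.normSq ((U : Matrix (Fin N) (Fin N) ℂ) k j) = 1 := by
    have := congrArg Complex.re h2
    simpa [Complex.normSq, mul_comm, Complex.mul_re, Complex.conj_re, Complex.conj_im,
      Complex.normSq_apply] using this
  have h4 : Complex.normSq ((U : Matrix (Fin N) (Fin N) ℂ) i j) ≤ 1 := by
    rw [← h3]
    exact Finset.single_le_sum
      (f := fun k => Complex.normSq ((U : Matrix (Fin N) (Fin N) ℂ) k j))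
      (fun k _ => Complex.normSq_nonneg _) (Finset.mem_univ i)
  rw [← Complex.sq_norm] at h4
  nlinarith [norm_nonneg ((U : Matrix (Fin N) (Fin N) ℂ) i j)]

lemma integrable_prod [IsProbabilityMeasure μ] (i j k l : Fin N) :
    Integrable (fun U : Matrix.unitaryGroup (Fin N) ℂ =>
      (U : Matrix (Fin N) (Fin N) ℂ) i j *
        (starRingEnd ℂ) ((U : Matrix (Fin N) (Fin N) ℂ) k l)) μ := by
  apply Integrable.mono' (integrable_const (1 : ℝ))
  · exact ((continuous_E i j).mul
      ((Complex.continuous_conj).comp (continuous_E k l))).aestronglyMeasurable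
  · filter_upwards with U
    rw [norm_mul]
    calc ‖(U : Matrix (Fin N) (Fin N) ℂ) i j‖ *
          ‖(starRingEnd ℂ) ((U : Matrix (Fin N) (Fin N) ℂ) k l)‖
        ≤ 1 * 1 := by
          apply mul_le_mul (norm_E_le U i j) ?_ (norm_nonneg _) zero_le_one
          rw [RingHomIsometric.norm_map]; exact norm_E_le U k l
      _ = 1 := one_mul 1

lemma offdiag [IsProbabilityMeasure μ]
    (hinv : ∀ g : Matrix.unitaryGroup (Fin N) ℂ, μ.map (fun U => g * U) = μ)
    {i j : Fin N} (hij : i ≠ j) :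
    ∫ U, (U : Matrix (Fin N) (Fin N) ℂ) i i *
        (starRingEnd ℂ) ((U : Matrix (Fin N) (Fin N) ℂ) j j) ∂μ = 0 := by
  set g : Matrix.unitaryGroup (Fin N) ℂ :=
    ⟨Matrix.diagonal (fun k => if k = i then (-1 : ℂ) else 1), sign_mem i⟩ with hg
  set f : Matrix.unitaryGroup (Fin N) ℂ → ℂ := fun U =>
    (U : Matrix (Fin N) (Fin N) ℂ) i i *
      (starRingEnd ℂ) ((U : Matrix (Fin N) (Fin N) ℂ) j j) with hf
  have hfc : Continuous f :=
    (continuous_E i i).mul ((Complex.continuous_conj).comp (continuous_E j j))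
  have key := int_inv hinv g f hfc
  have hneg : ∀ U, f (g * U) = - f U := by
    intro U
    have hcoe : ((g * U : Matrix.unitaryGroup (Fin N) ℂ) : Matrix (Fin N) (Fin N) ℂ)
        = (g : Matrix (Fin N) (Fin N) ℂ) * (U : Matrix (Fin N) (Fin N) ℂ) := rfl
    simp only [hf, hcoe, hg, Matrix.diagonal_mul, if_pos rfl, if_neg hij.symm]
    simp [hij.symm]
  rw [show (fun U => f (g * U)) = fun U => - f U from funext hneg] at key
  rw [integral_neg] at key
  linear_combination (-(1:ℂ)/2) * key

lemma diag_swap [IsProbabilityMeasure μ]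
    (hinv : ∀ g : Matrix.unitaryGroup (Fin N) ℂ, μ.map (fun U => g * U) = μ)
    (i k : Fin N) :
    ∫ U, (U : Matrix (Fin N) (Fin N) ℂ) i i *
        (starRingEnd ℂ) ((U : Matrix (Fin N) (Fin N) ℂ) i i) ∂μ
      = ∫ U, (U : Matrix (Fin N) (Fin N) ℂ) k i *
        (starRingEnd ℂ) ((U : Matrix (Fin N) (Fin N) ℂ) k i) ∂μ := by
  set σ := Equiv.swap i k with hσ
  set g : Matrix.unitaryGroup (Fin N) ℂ := ⟨σ.permMatrix ℂ, perm_mem σ⟩ with hg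
  set f : Matrix.unitaryGroup (Fin N) ℂ → ℂ := fun U =>
    (U : Matrix (Fin N) (Fin N) ℂ) k i *
      (starRingEnd ℂ) ((U : Matrix (Fin N) (Fin N) ℂ) k i) with hf
  have hfc : Continuous f :=
    (continuous_E k i).mul ((Complex.continuous_conj).comp (continuous_E k i))
  have key := int_inv hinv g f hfc
  have heq : ∀ U : Matrix.unitaryGroup (Fin N) ℂ, f (g * U) =
      (U : Matrix (Fin N) (Fin N) ℂ) i i *
        (starRingEnd ℂ) ((U : Matrix (Fin N) (Fin N) ℂ) i i) := by
    intro U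
    have hcoe : ((g * U : Matrix.unitaryGroup (Fin N) ℂ) : Matrix (Fin N) (Fin N) ℂ)
        = σ.permMatrix ℂ * (U : Matrix (Fin N) (Fin N) ℂ) := rfl
    have h2 : (σ.permMatrix ℂ * (U : Matrix (Fin N) (Fin N) ℂ)) k i
        = (U : Matrix (Fin N) (Fin N) ℂ) (σ k) i := by
      rw [Equiv.Perm.permMatrix, PEquiv.toMatrix_toPEquiv_mul, Matrix.submatrix_apply]
      rfl
    simp only [hf, hcoe, h2]
    simp [hσ, Equiv.swap_apply_right]
  rw [show (fun U => f (g * U)) = _ from funext heq] at key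
  exact key

lemma diag_val [IsProbabilityMeasure μ]
    (hinv : ∀ g : Matrix.unitaryGroup (Fin N) ℂ, μ.map (fun U => g * U) = μ)
    (i : Fin N) :
    (N : ℂ) * ∫ U, (U : Matrix (Fin N) (Fin N) ℂ) i i *
        (starRingEnd ℂ) ((U : Matrix (Fin N) (Fin N) ℂ) i i) ∂μ = 1 := by
  have hsum : ∑ k, ∫ U, (U : Matrix (Fin N) (Fin N) ℂ) k i *
      (starRingEnd ℂ) ((U : Matrix (Fin N) (Fin N) ℂ) k i) ∂μ = 1 := by
    rw [← integral_finset_sum _ (fun k _ => integrable_prod k i k i)]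
    simp only [col_sum]
    simp
  have heach : ∀ k : Fin N, (∫ U, (U : Matrix (Fin N) (Fin N) ℂ) k i *
      (starRingEnd ℂ) ((U : Matrix (Fin N) (Fin N) ℂ) k i) ∂μ)
      = ∫ U, (U : Matrix (Fin N) (Fin N) ℂ) i i *
        (starRingEnd ℂ) ((U : Matrix (Fin N) (Fin N) ℂ) i i) ∂μ :=
    fun k => (diag_swap hinv i k).symm
  rw [Finset.sum_congr rfl (fun k _ => heach k)] at hsum
  simpa [Finset.sum_const, Finset.card_univ, nsmul_eq_mul] using hsum

end TraceAbsSqAux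

/-- For the Haar probability measure on `U(N)`: `∫ |Tr(U)|² dU = 1`. -/
theorem trace_abs_sq_integral (N : ℕ) (hN : 1 ≤ N)
    (μ : Measure (Matrix.unitaryGroup (Fin N) ℂ)) [IsProbabilityMeasure μ]
    (hinv : ∀ g : Matrix.unitaryGroup (Fin N) ℂ,
      μ.map (fun U => g * U) = μ) :
    ∫ U, Matrix.trace (U : Matrix (Fin N) (Fin N) ℂ) *
          (starRingEnd ℂ) (Matrix.trace (U : Matrix (Fin N) (Fin N) ℂ)) ∂μ
      = 1 := by
  classical
  have hNz : (N : ℂ) ≠ 0 := by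
    exact_mod_cast Nat.cast_ne_zero.mpr (by omega)
  have hint : ∀ i j : Fin N, Integrable (fun U : Matrix.unitaryGroup (Fin N) ℂ =>
      (U : Matrix (Fin N) (Fin N) ℂ) i i *
        (starRingEnd ℂ) ((U : Matrix (Fin N) (Fin N) ℂ) j j)) μ :=
    fun i j => TraceAbsSqAux.integrable_prod i i j j
  have hexp : (fun U : Matrix.unitaryGroup (Fin N) ℂ =>
      Matrix.trace (U : Matrix (Fin N) (Fin N) ℂ) *
        (starRingEnd ℂ) (Matrix.trace (U : Matrix (Fin N) (Fin N) ℂ)))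
      = fun U : Matrix.unitaryGroup (Fin N) ℂ => ∑ i, ∑ j, (U : Matrix (Fin N) (Fin N) ℂ) i i *
          (starRingEnd ℂ) ((U : Matrix (Fin N) (Fin N) ℂ) j j) := by
    funext U
    simp only [Matrix.trace, Matrix.diag, map_sum, Finset.sum_mul, Finset.mul_sum]
    rw [Finset.sum_comm]
  rw [hexp]
  rw [integral_finset_sum _ (fun i _ =>
    integrable_finset_sum _ (fun j _ => hint i j))]
  have hstep : ∀ i : Fin N,
      (∫ U, ∑ j, (U : Matrix (Fin N) (Fin N) ℂ) i i *
        (starRingEnd ℂ) ((U : Matrix (Fin N) (Fin N) ℂ) j j) ∂μ) = (N : ℂ)⁻¹ := by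
    intro i
    rw [integral_finset_sum _ (fun j _ => hint i j)]
    rw [Finset.sum_eq_single i
      (fun j _ hji => TraceAbsSqAux.offdiag hinv (Ne.symm hji))
      (fun h => absurd (Finset.mem_univ i) h)]
    have := TraceAbsSqAux.diag_val hinv (μ := μ) i
    field_simp
    linear_combination this
  rw [Finset.sum_congr rfl (fun i _ => hstep i)]
  simp only [Finset.sum_const, Finset.card_univ, Fintype.card_fin, nsmul_eq_mul]
  field_simp
end

section
/- For a Haar-random unitary U ∈ U(N) and integers N ≥ 2, ∫_{U(N)} Tr(U²) dU = 0 and ∫_{U(N)} |Tr(U²)|² dU = 2. -/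
open MeasureTheory Matrix

namespace TraceSqAux

instance (N : ℕ) : BorelSpace (Matrix.unitaryGroup (Fin N) ℂ) := ⟨rfl⟩

abbrev UG (N : ℕ) := Matrix.unitaryGroup (Fin N) ℂ

local notation "cj" => starRingEnd ℂ

variable {N : ℕ}

lemma continuous_entry (i j : Fin N) :
    Continuous fun U : UG N => (U : Matrix (Fin N) (Fin N) ℂ) i j := by
  have : Continuous fun M : Matrix (Fin N) (Fin N) ℂ => M i j :=
    (continuous_apply j).comp (continuous_apply i)
  exact this.comp continuous_subtype_val

lemma continuous_centry (i j : Fin N) :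
    Continuous fun U : UG N => cj ((U : Matrix (Fin N) (Fin N) ℂ) i j) :=
  Complex.continuous_conj.comp (continuous_entry i j)

lemma continuous_mulLeft (g : UG N) : Continuous fun U : UG N => g * U := by
  apply Continuous.subtype_mk
  exact Continuous.matrix_mul continuous_const continuous_subtype_val

lemma integrable_of_bdd (μ : Measure (UG N)) [IsProbabilityMeasure μ]
    {f : UG N → ℂ} (hf : Continuous f) {C : ℝ} (hb : ∀ U, ‖f U‖ ≤ C) :
    Integrable f μ :=
  (integrable_const C).mono' hf.aestronglyMeasurable (Filter.Eventually.of_forall hb)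

lemma entry_bd (U : UG N) (i j : Fin N) : ‖(U : Matrix (Fin N) (Fin N) ℂ) i j‖ ≤ 1 :=
  entry_norm_bound_of_unitary U.2 i j

/-- the basic quartic integrand -/
def F4 (i k p r j l q s : Fin N) : UG N → ℂ := fun U =>
  (U : Matrix (Fin N) (Fin N) ℂ) i j * (U : Matrix (Fin N) (Fin N) ℂ) k l *
    cj ((U : Matrix (Fin N) (Fin N) ℂ) p q) * cj ((U : Matrix (Fin N) (Fin N) ℂ) r s)

lemma continuous_F4 (i k p r j l q s : Fin N) : Continuous (F4 i k p r j l q s) :=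
  (((continuous_entry i j).mul (continuous_entry k l)).mul (continuous_centry p q)).mul
    (continuous_centry r s)

lemma F4_bd (i k p r j l q s : Fin N) (U : UG N) : ‖F4 i k p r j l q s U‖ ≤ 1 := by
  have h1 := entry_bd U i j
  have h2 := entry_bd U k l
  have h3 := entry_bd U p q
  have h4 := entry_bd U r s
  calc ‖F4 i k p r j l q s U‖
      = ‖(U : Matrix (Fin N) (Fin N) ℂ) i j‖ * ‖(U : Matrix (Fin N) (Fin N) ℂ) k l‖ *
        ‖(U : Matrix (Fin N) (Fin N) ℂ) p q‖ * ‖(U : Matrix (Fin N) (Fin N) ℂ) r s‖ := by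
        simp [F4, norm_mul]
    _ ≤ 1 := by
        exact mul_le_one₀ (mul_le_one₀ (mul_le_one₀ h1 (norm_nonneg _) h2) (norm_nonneg _) h3)
          (norm_nonneg _) h4

lemma integrable_F4 (μ : Measure (UG N)) [IsProbabilityMeasure μ] (i k p r j l q s : Fin N) :
    Integrable (F4 i k p r j l q s) μ :=
  integrable_of_bdd μ (continuous_F4 i k p r j l q s) (F4_bd i k p r j l q s)

/-- moment tensor -/
noncomputable def mm (μ : Measure (UG N)) (i k p r j l q s : Fin N) : ℂ :=
  ∫ U, F4 i k p r j l q s U ∂μ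


lemma int_invariant (μ : Measure (UG N)) [IsProbabilityMeasure μ]
    (hinv : ∀ g : UG N, μ.map (fun U => g * U) = μ) (g : UG N)
    {f : UG N → ℂ} (hf : Continuous f) :
    ∫ U, f (g * U) ∂μ = ∫ U, f U ∂μ := by
  conv_rhs => rw [← hinv g]
  rw [integral_map (continuous_mulLeft g).measurable.aemeasurable hf.aestronglyMeasurable]

lemma expand4 (g M : Matrix (Fin N) (Fin N) ℂ) (i k p r j l q s : Fin N) :
    (g * M) i j * (g * M) k l * cj ((g * M) p q) * cj ((g * M) r s)
      = ∑ t1, ∑ t2, ∑ t3, ∑ t4,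
          (g i t4 * g k t3 * cj (g p t2) * cj (g r t1)) *
            (M t4 j * M t3 l * cj (M t2 q) * cj (M t1 s)) := by
  simp only [Matrix.mul_apply, map_sum, _root_.map_mul, Finset.sum_mul, Finset.mul_sum]
  refine Finset.sum_congr rfl fun t1 _ => Finset.sum_congr rfl fun t2 _ =>
    Finset.sum_congr rfl fun t3 _ => Finset.sum_congr rfl fun t4 _ => by ring

lemma integral_sum4 (μ : Measure (UG N)) [IsProbabilityMeasure μ]
    (c : Fin N → Fin N → Fin N → Fin N → ℂ) (j l q s : Fin N) :
    ∫ U, (∑ t1, ∑ t2, ∑ t3, ∑ t4, c t1 t2 t3 t4 * F4 t4 t3 t2 t1 j l q s U) ∂μ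
      = ∑ t1, ∑ t2, ∑ t3, ∑ t4, c t1 t2 t3 t4 * mm μ t4 t3 t2 t1 j l q s := by
  have I1 : ∀ t1 t2 t3 t4 : Fin N,
      Integrable (fun U => c t1 t2 t3 t4 * F4 t4 t3 t2 t1 j l q s U) μ :=
    fun t1 t2 t3 t4 => (integrable_F4 μ t4 t3 t2 t1 j l q s).const_mul _
  rw [integral_finset_sum _ (fun t1 _ => integrable_finset_sum _ fun t2 _ =>
    integrable_finset_sum _ fun t3 _ => integrable_finset_sum _ fun t4 _ => I1 t1 t2 t3 t4)]
  refine Finset.sum_congr rfl fun t1 _ => ?_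
  rw [integral_finset_sum _ (fun t2 _ => integrable_finset_sum _ fun t3 _ =>
    integrable_finset_sum _ fun t4 _ => I1 t1 t2 t3 t4)]
  refine Finset.sum_congr rfl fun t2 _ => ?_
  rw [integral_finset_sum _ (fun t3 _ => integrable_finset_sum _ fun t4 _ => I1 t1 t2 t3 t4)]
  refine Finset.sum_congr rfl fun t3 _ => ?_
  rw [integral_finset_sum _ (fun t4 _ => I1 t1 t2 t3 t4)]
  refine Finset.sum_congr rfl fun t4 _ => ?_
  simp only [← smul_eq_mul, integral_smul]
  rfl

lemma key_inv (μ : Measure (UG N)) [IsProbabilityMeasure μ]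
    (hinv : ∀ g : UG N, μ.map (fun U => g * U) = μ) (g : UG N) (i k p r j l q s : Fin N) :
    ∑ t1, ∑ t2, ∑ t3, ∑ t4,
        ((g : Matrix (Fin N) (Fin N) ℂ) i t4 * (g : Matrix (Fin N) (Fin N) ℂ) k t3 *
          cj ((g : Matrix (Fin N) (Fin N) ℂ) p t2) * cj ((g : Matrix (Fin N) (Fin N) ℂ) r t1)) *
          mm μ t4 t3 t2 t1 j l q s
      = mm μ i k p r j l q s := by
  have h1 : mm μ i k p r j l q s = ∫ U, F4 i k p r j l q s (g * U) ∂μ :=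
    (int_invariant μ hinv g (continuous_F4 i k p r j l q s)).symm
  have h2 : (fun U : UG N => F4 i k p r j l q s (g * U)) = fun U => ∑ t1, ∑ t2, ∑ t3, ∑ t4,
      ((g : Matrix (Fin N) (Fin N) ℂ) i t4 * (g : Matrix (Fin N) (Fin N) ℂ) k t3 *
        cj ((g : Matrix (Fin N) (Fin N) ℂ) p t2) * cj ((g : Matrix (Fin N) (Fin N) ℂ) r t1)) *
        F4 t4 t3 t2 t1 j l q s U := by
    funext U
    have hco : ((g * U : UG N) : Matrix (Fin N) (Fin N) ℂ)
        = (g : Matrix (Fin N) (Fin N) ℂ) * (U : Matrix (Fin N) (Fin N) ℂ) := rfl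
    simp only [F4, hco]
    exact expand4 _ _ i k p r j l q s
  rw [h1, h2]
  exact (integral_sum4 μ (fun t1 t2 t3 t4 =>
    (g : Matrix (Fin N) (Fin N) ℂ) i t4 * (g : Matrix (Fin N) (Fin N) ℂ) k t3 *
      cj ((g : Matrix (Fin N) (Fin N) ℂ) p t2) * cj ((g : Matrix (Fin N) (Fin N) ℂ) r t1)) j l q s).symm


/-- diagonal unitary -/
def diagU (d : Fin N → ℂ) (hd : ∀ x, d x * cj (d x) = 1) : UG N :=
  ⟨Matrix.diagonal d, by
    rw [Matrix.mem_unitaryGroup_iff, Matrix.star_eq_conjTranspose,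
      Matrix.diagonal_conjTranspose, Matrix.diagonal_mul_diagonal]
    ext a b
    by_cases hab : a = b
    · subst hab
      simpa [Matrix.diagonal_apply_eq, Matrix.one_apply_eq] using hd a
    · simp [Matrix.diagonal_apply_ne _ hab, Matrix.one_apply_ne hab]⟩

lemma diag_inv (μ : Measure (UG N)) [IsProbabilityMeasure μ]
    (hinv : ∀ g : UG N, μ.map (fun U => g * U) = μ)
    (d : Fin N → ℂ) (hd : ∀ x, d x * cj (d x) = 1) (i k p r j l q s : Fin N) :
    (d i * d k * cj (d p) * cj (d r)) * mm μ i k p r j l q s = mm μ i k p r j l q s := by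
  have h := key_inv μ hinv (diagU d hd) i k p r j l q s
  simp only [diagU, Matrix.diagonal_apply, apply_ite cj, map_zero, ite_mul, mul_ite,
    zero_mul, mul_zero, Finset.sum_ite_irrel, Finset.sum_const_zero, Finset.sum_ite_eq,
    Finset.mem_univ, if_true] at h
  linear_combination h

lemma Ifour (a b c d : ℕ) (ha : a ≤ 1) (hb : b ≤ 1) (hc : c ≤ 1) (hd : d ≤ 1)
    (h : Complex.I ^ a * Complex.I ^ b * (-Complex.I) ^ c * (-Complex.I) ^ d = 1) :
    a + b = c + d := by
  interval_cases a <;> interval_cases b <;> interval_cases c <;> interval_cases d <;>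
    simp_all [Complex.ext_iff] <;> norm_num at h

lemma count_pair {i k p r : Fin N}
    (H : ∀ j₀ : Fin N, ((if i = j₀ then 1 else 0) + (if k = j₀ then 1 else 0) : ℕ)
        = (if p = j₀ then 1 else 0) + (if r = j₀ then 1 else 0)) :
    (p = i ∧ r = k) ∨ (p = k ∧ r = i) := by
  by_cases h2 : p = i
  · by_cases h5 : r = k
    · exact Or.inl ⟨h2, h5⟩
    · exfalso
      have Hk := H k
      rw [if_pos rfl, if_neg h5] at Hk
      by_cases hik : i = k
      · rw [if_pos hik, if_pos (h2.trans hik)] at Hk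
        norm_num at Hk
      · rw [if_neg hik] at Hk
        by_cases hpk : p = k
        · exact hik (h2.symm.trans hpk)
        · rw [if_neg hpk] at Hk
          norm_num at Hk
  · have Hi := H i
    rw [if_pos rfl, if_neg h2] at Hi
    have hri : r = i := by
      by_contra h
      rw [if_neg h] at Hi
      by_cases hk : k = i
      · rw [if_pos hk] at Hi; norm_num at Hi
      · rw [if_neg hk] at Hi; norm_num at Hi
    have hki : ¬ k = i := by
      intro hk
      rw [if_pos hk, if_pos hri] at Hi
      norm_num at Hi
    have Hk := H k
    rw [if_pos rfl, if_neg (fun h => hki h.symm : ¬ i = k)] at Hk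
    by_cases hpk : p = k
    · exact Or.inr ⟨hpk, hri⟩
    · exfalso
      rw [if_neg hpk] at Hk
      by_cases hrk : r = k
      · exact hki ((hri.symm.trans hrk).symm)
      · rw [if_neg hrk] at Hk
        norm_num at Hk

lemma mm_vanish (μ : Measure (UG N)) [IsProbabilityMeasure μ]
    (hinv : ∀ g : UG N, μ.map (fun U => g * U) = μ) {i k p r : Fin N} (j l q s : Fin N)
    (hne : ¬((p = i ∧ r = k) ∨ (p = k ∧ r = i))) :
    mm μ i k p r j l q s = 0 := by
  by_contra hm
  apply hne
  apply count_pair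
  intro j₀
  classical
  set d : Fin N → ℂ := fun x => if x = j₀ then Complex.I else 1 with hdd
  have hd : ∀ x, d x * cj (d x) = 1 := by
    intro x
    by_cases h : x = j₀ <;> simp [hdd, h, Complex.conj_I, Complex.I_mul_I]
  have h := diag_inv μ hinv d hd i k p r j l q s
  have h2 : d i * d k * cj (d p) * cj (d r) = 1 :=
    mul_right_cancel₀ hm (h.trans (one_mul _).symm)
  have e1 : d i = Complex.I ^ (if i = j₀ then 1 else 0 : ℕ) := by
    by_cases h' : i = j₀ <;> simp [hdd, h']
  have e2 : d k = Complex.I ^ (if k = j₀ then 1 else 0 : ℕ) := by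
    by_cases h' : k = j₀ <;> simp [hdd, h']
  have e3 : cj (d p) = (-Complex.I) ^ (if p = j₀ then 1 else 0 : ℕ) := by
    by_cases h' : p = j₀ <;> simp [hdd, h', Complex.conj_I]
  have e4 : cj (d r) = (-Complex.I) ^ (if r = j₀ then 1 else 0 : ℕ) := by
    by_cases h' : r = j₀ <;> simp [hdd, h', Complex.conj_I]
  rw [e1, e2, e3, e4] at h2
  exact Ifour _ _ _ _ (by split <;> omega) (by split <;> omega) (by split <;> omega)
    (by split <;> omega) h2


/-- permutation unitary: row i of `permU σ` has a 1 in column `σ i`. -/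
def permU (σ : Equiv.Perm (Fin N)) : UG N :=
  ⟨Matrix.of fun a b => if b = σ a then (1 : ℂ) else 0, by
    rw [Matrix.mem_unitaryGroup_iff]
    ext a b
    rw [Matrix.mul_apply, Matrix.one_apply]
    simp only [Matrix.star_apply, Matrix.of_apply, apply_ite (star : ℂ → ℂ), star_one,
      star_zero, ite_mul, mul_ite, one_mul, mul_one, zero_mul, mul_zero, Finset.sum_ite_eq',
      Finset.mem_univ, if_true]
    by_cases hab : a = b
    · subst hab; simp
    · rw [if_neg hab, if_neg (fun h : σ b = σ a => hab (σ.injective h.symm))]⟩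

lemma perm_inv (μ : Measure (UG N)) [IsProbabilityMeasure μ]
    (hinv : ∀ g : UG N, μ.map (fun U => g * U) = μ)
    (σ : Equiv.Perm (Fin N)) (i k p r j l q s : Fin N) :
    mm μ (σ i) (σ k) (σ p) (σ r) j l q s = mm μ i k p r j l q s := by
  have h := key_inv μ hinv (permU σ) i k p r j l q s
  simp only [permU, Matrix.of_apply, apply_ite cj, _root_.map_one, map_zero, ite_mul, mul_ite,
    one_mul, mul_one, zero_mul, mul_zero, Finset.sum_ite_irrel, Finset.sum_const_zero,
    Finset.sum_ite_eq', Finset.mem_univ, if_true] at h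
  simpa using h


lemma sum_restrict {x y : Fin N} (f : Fin N → ℂ)
    (hf : ∀ t, t ≠ x → t ≠ y → f t = 0) :
    ∑ t, f t = ∑ t ∈ ({x, y} : Finset (Fin N)), f t := by
  refine (Finset.sum_subset (Finset.subset_univ _) ?_).symm
  intro t _ ht
  simp only [Finset.mem_insert, Finset.mem_singleton] at ht
  push_neg at ht
  exact hf t ht.1 ht.2

/-- the 2×2 reflection [[3/5,4/5],[4/5,-3/5]] in coordinates x,y -/
noncomputable def Rm (x y : Fin N) : Matrix (Fin N) (Fin N) ℂ :=
  Matrix.of fun a b =>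
    if a = x then (if b = x then 3/5 else if b = y then 4/5 else 0)
    else if a = y then (if b = x then 4/5 else if b = y then -3/5 else 0)
    else if b = a then 1 else 0

lemma Rm_star (x y : Fin N) (hxy : x ≠ y) : star (Rm x y) = Rm x y := by
  ext a b
  simp only [Matrix.star_apply, Rm, Matrix.of_apply]
  by_cases hax : a = x <;> by_cases hay : a = y <;> by_cases hbx : b = x <;>
    by_cases hby : b = y <;> by_cases hab : a = b <;>
    simp_all [map_div₀, map_neg, map_ofNat, _root_.map_one, map_zero, Complex.star_def,
      eq_comm]

lemma Rm_row (x y : Fin N) (t : Fin N) (ht1 : t ≠ x) (ht2 : t ≠ y) : Rm x y x t = 0 := by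
  simp [Rm, ht1, ht2]

lemma Rm_mem (x y : Fin N) (hxy : x ≠ y) : Rm x y ∈ Matrix.unitaryGroup (Fin N) ℂ := by
  rw [Matrix.mem_unitaryGroup_iff, Rm_star x y hxy]
  ext a b
  rw [Matrix.mul_apply, Matrix.one_apply]
  by_cases hax : a = x
  · subst hax
    rw [sum_restrict (x := a) (y := y) _ (fun t h1 h2 => by simp [Rm_row a y t h1 h2]),
      Finset.sum_pair hxy]
    by_cases hbx : b = a <;> by_cases hby : b = y <;>
      simp_all [Rm, hxy, hxy.symm] <;>
      first
      | exact fun h => hbx h.symm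
      | (rw [if_neg (fun h : a = b => hbx h.symm)])
      | norm_num
      | (split_ifs <;> simp_all <;> norm_num)
  · by_cases hay : a = y
    · subst hay
      have hrow : ∀ t, t ≠ x → t ≠ a → Rm x a a t = 0 := by
        intro t h1 h2; simp [Rm, h1, h2, hxy]
      rw [sum_restrict (x := x) (y := a) _ (fun t h1 h2 => by simp [hrow t h1 h2]),
        Finset.sum_pair hxy]
      by_cases hbx : b = x <;> by_cases hby : b = a <;>
        simp_all [Rm, hxy, hxy.symm] <;>
        first
        | exact fun h => hby h.symm
        | (rw [if_neg (fun h : a = b => hby h.symm)])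
        | norm_num
        | (split_ifs <;> simp_all <;> norm_num)
    · have hrow : ∀ t, Rm x y a t = if t = a then 1 else 0 := by
        intro t; simp [Rm, hax, hay]
      simp only [hrow, ite_mul, one_mul, zero_mul, Finset.sum_ite_eq', Finset.mem_univ,
        if_true]
      by_cases hab : a = b
      · subst hab; simp only [if_pos rfl]
      · rw [if_neg (fun h : a = b => hab h)]
        have hba : ¬ b = a := fun h => hab h.symm
        simp [Rm, hax, hay, hba]

noncomputable def reflU (x y : Fin N) (hxy : x ≠ y) : UG N := ⟨Rm x y, Rm_mem x y hxy⟩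

lemma refl_rel (μ : Measure (UG N)) [IsProbabilityMeasure μ]
    (hinv : ∀ g : UG N, μ.map (fun U => g * U) = μ)
    (x y : Fin N) (hxy : x ≠ y) (j l q s : Fin N) :
    mm μ x x x x j l q s = mm μ x y x y j l q s + mm μ x y y x j l q s := by
  have hyx : y ≠ x := hxy.symm
  have h : (∑ t1, ∑ t2, ∑ t3, ∑ t4,
      (Rm x y x t4 * Rm x y x t3 * cj (Rm x y x t2) * cj (Rm x y x t1)) *
        mm μ t4 t3 t2 t1 j l q s) = mm μ x x x x j l q s :=
    key_inv μ hinv (reflU x y hxy) x x x x j l q s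
  have e : (∑ t1, ∑ t2, ∑ t3, ∑ t4,
      (Rm x y x t4 * Rm x y x t3 * cj (Rm x y x t2) * cj (Rm x y x t1)) *
        mm μ t4 t3 t2 t1 j l q s)
      = ∑ t1 ∈ ({x, y} : Finset (Fin N)), ∑ t2 ∈ ({x, y} : Finset (Fin N)),
          ∑ t3 ∈ ({x, y} : Finset (Fin N)), ∑ t4 ∈ ({x, y} : Finset (Fin N)),
          (Rm x y x t4 * Rm x y x t3 * cj (Rm x y x t2) * cj (Rm x y x t1)) *
            mm μ t4 t3 t2 t1 j l q s := by
    rw [sum_restrict _ (fun t h1 h2 => by simp [Rm_row x y t h1 h2])]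
    refine Finset.sum_congr rfl fun t1 _ => ?_
    rw [sum_restrict _ (fun t h1 h2 => by simp [Rm_row x y t h1 h2])]
    refine Finset.sum_congr rfl fun t2 _ => ?_
    rw [sum_restrict _ (fun t h1 h2 => by simp [Rm_row x y t h1 h2])]
    refine Finset.sum_congr rfl fun t3 _ => ?_
    rw [sum_restrict _ (fun t h1 h2 => by simp [Rm_row x y t h1 h2])]
  rw [e] at h
  simp only [Finset.sum_pair hxy] at h
  have vxx : Rm x y x x = 3/5 := by simp [Rm]
  have vxy : Rm x y x y = 4/5 := by simp [Rm, hyx]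
  have c35 : cj ((3:ℂ)/5) = 3/5 := by simp [map_div₀, map_ofNat]
  have c45 : cj ((4:ℂ)/5) = 4/5 := by simp [map_div₀, map_ofNat]
  rw [vxx, vxy] at h
  rw [c35, c45] at h
  have V : ∀ (a b c d : Fin N), ¬((c = a ∧ d = b) ∨ (c = b ∧ d = a)) →
      mm μ a b c d j l q s = 0 := fun a b c d hn => mm_vanish μ hinv j l q s hn
  rw [V x x x y (by simp [hyx]), V x x y x (by simp [hyx]), V x x y y (by simp [hyx]),
    V x y x x (by simp [hxy]), V x y y y (by simp [hyx]), V y x x x (by simp [hxy]),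
    V y x y y (by simp [hyx]), V y y x x (by simp [hxy]), V y y x y (by simp [hxy]),
    V y y y x (by simp [hxy])] at h
  have P1 : mm μ y y y y j l q s = mm μ x x x x j l q s := by
    have := perm_inv μ hinv (Equiv.swap x y) x x x x j l q s
    simpa [Equiv.swap_apply_left] using this
  have P2 : mm μ y x y x j l q s = mm μ x y x y j l q s := by
    have := perm_inv μ hinv (Equiv.swap x y) x y x y j l q s
    simpa [Equiv.swap_apply_left, Equiv.swap_apply_right] using this
  have P3 : mm μ y x x y j l q s = mm μ x y y x j l q s := by
    have := perm_inv μ hinv (Equiv.swap x y) x y y x j l q s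
    simpa [Equiv.swap_apply_left, Equiv.swap_apply_right] using this
  rw [P1, P2, P3] at h
  linear_combination ((-625 : ℂ)/288) * h


lemma exists_perm (x y i k : Fin N) (hxy : x ≠ y) (hik : i ≠ k) :
    ∃ σ : Equiv.Perm (Fin N), σ x = i ∧ σ y = k := by
  have h1 : (Equiv.swap x i) y ≠ i := by
    intro h
    exact hxy ((Equiv.swap x i).injective (h.trans (Equiv.swap_apply_left x i).symm)).symm
  refine ⟨(Equiv.swap x i).trans (Equiv.swap ((Equiv.swap x i) y) k), ?_, ?_⟩
  · simp only [Equiv.trans_apply, Equiv.swap_apply_left]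
    exact Equiv.swap_apply_of_ne_of_ne (Ne.symm h1) hik
  · simp only [Equiv.trans_apply]
    exact Equiv.swap_apply_left _ _

lemma mmspan (μ : Measure (UG N)) [IsProbabilityMeasure μ]
    (hinv : ∀ g : UG N, μ.map (fun U => g * U) = μ)
    (x y : Fin N) (hxy : x ≠ y) (i k p r j l q s : Fin N) :
    mm μ i k p r j l q s =
      (if p = i ∧ r = k then mm μ x y x y j l q s else 0)
        + (if p = k ∧ r = i then mm μ x y y x j l q s else 0) := by
  by_cases h1 : p = i ∧ r = k <;> by_cases h2 : p = k ∧ r = i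
  · rw [if_pos h1, if_pos h2]
    obtain ⟨hp, hr⟩ := h1
    have hik : i = k := hp.symm.trans h2.1
    rw [hp, hr, ← hik]
    have hperm := perm_inv μ hinv (Equiv.swap x i) x x x x j l q s
    rw [Equiv.swap_apply_left] at hperm
    rw [hperm]
    exact refl_rel μ hinv x y hxy j l q s
  · rw [if_pos h1, if_neg h2, add_zero]
    obtain ⟨hp, hr⟩ := h1
    rw [hp, hr]
    have hik : i ≠ k := fun h => h2 ⟨hp.trans h, hr.trans h.symm⟩
    obtain ⟨σ, hσx, hσy⟩ := exists_perm x y i k hxy hik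
    have hperm := perm_inv μ hinv σ x y x y j l q s
    rw [hσx, hσy] at hperm
    exact hperm
  · rw [if_neg h1, if_pos h2, zero_add]
    obtain ⟨hp, hr⟩ := h2
    rw [hp, hr]
    have hik : i ≠ k := fun h => h1 ⟨hp.trans h.symm, hr.trans h⟩
    obtain ⟨σ, hσx, hσy⟩ := exists_perm x y i k hxy hik
    have hperm := perm_inv μ hinv σ x y y x j l q s
    rw [hσx, hσy] at hperm
    exact hperm
  · rw [if_neg h1, if_neg h2, add_zero]
    exact mm_vanish μ hinv j l q s (fun h => h.elim h1 h2)


lemma sumI1 (μ : Measure (UG N)) [IsProbabilityMeasure μ] (i k p r : Fin N) :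
    (∑ j, ∑ l, mm μ i k p r j l j l)
      = (if i = p then 1 else 0) * (if k = r then 1 else 0) := by
  have hint : ∀ (j l : Fin N), Integrable (F4 i k p r j l j l) μ :=
    fun j l => integrable_F4 μ i k p r j l j l
  have e1 : (∫ U, ∑ j, ∑ l, F4 i k p r j l j l U ∂μ) = ∑ j, ∑ l, mm μ i k p r j l j l := by
    rw [integral_finset_sum _ (fun j _ => integrable_finset_sum _ fun l _ => hint j l)]
    exact Finset.sum_congr rfl fun j _ => integral_finset_sum _ fun l _ => hint j l
  rw [← e1]
  have e2 : ∀ U : UG N, (∑ j, ∑ l, F4 i k p r j l j l U)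
      = (if i = p then 1 else 0) * (if k = r then 1 else 0) := by
    intro U
    have hU : (U : Matrix (Fin N) (Fin N) ℂ) * star (U : Matrix (Fin N) (Fin N) ℂ) = 1 :=
      U.2.2
    have h1 : (∑ j, (U : Matrix (Fin N) (Fin N) ℂ) i j * cj ((U : Matrix (Fin N) (Fin N) ℂ) p j))
        = if i = p then 1 else 0 := by
      have h := congrFun (congrFun hU i) p
      rw [Matrix.mul_apply] at h
      simp only [Matrix.star_apply, RCLike.star_def] at h
      rw [h, Matrix.one_apply]
    have h2 : (∑ l, (U : Matrix (Fin N) (Fin N) ℂ) k l * cj ((U : Matrix (Fin N) (Fin N) ℂ) r l))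
        = if k = r then 1 else 0 := by
      have h := congrFun (congrFun hU k) r
      rw [Matrix.mul_apply] at h
      simp only [Matrix.star_apply, RCLike.star_def] at h
      rw [h, Matrix.one_apply]
    rw [← h1, ← h2, Finset.sum_mul_sum]
    exact Finset.sum_congr rfl fun j _ => Finset.sum_congr rfl fun l _ => by
      simp only [F4]; ring
  simp only [e2]
  simp [integral_const, measure_univ]

lemma sumI2 (μ : Measure (UG N)) [IsProbabilityMeasure μ] (i k p r : Fin N) :
    (∑ j, ∑ l, mm μ i k p r j l l j)
      = (if i = r then 1 else 0) * (if k = p then 1 else 0) := by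
  have hint : ∀ (j l : Fin N), Integrable (F4 i k p r j l l j) μ :=
    fun j l => integrable_F4 μ i k p r j l l j
  have e1 : (∫ U, ∑ j, ∑ l, F4 i k p r j l l j U ∂μ) = ∑ j, ∑ l, mm μ i k p r j l l j := by
    rw [integral_finset_sum _ (fun j _ => integrable_finset_sum _ fun l _ => hint j l)]
    exact Finset.sum_congr rfl fun j _ => integral_finset_sum _ fun l _ => hint j l
  rw [← e1]
  have e2 : ∀ U : UG N, (∑ j, ∑ l, F4 i k p r j l l j U)
      = (if i = r then 1 else 0) * (if k = p then 1 else 0) := by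
    intro U
    have hU : (U : Matrix (Fin N) (Fin N) ℂ) * star (U : Matrix (Fin N) (Fin N) ℂ) = 1 :=
      U.2.2
    have h1 : (∑ j, (U : Matrix (Fin N) (Fin N) ℂ) i j * cj ((U : Matrix (Fin N) (Fin N) ℂ) r j))
        = if i = r then 1 else 0 := by
      have h := congrFun (congrFun hU i) r
      rw [Matrix.mul_apply] at h
      simp only [Matrix.star_apply, RCLike.star_def] at h
      rw [h, Matrix.one_apply]
    have h2 : (∑ l, (U : Matrix (Fin N) (Fin N) ℂ) k l * cj ((U : Matrix (Fin N) (Fin N) ℂ) p l))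
        = if k = p then 1 else 0 := by
      have h := congrFun (congrFun hU k) p
      rw [Matrix.mul_apply] at h
      simp only [Matrix.star_apply, RCLike.star_def] at h
      rw [h, Matrix.one_apply]
    rw [← h1, ← h2, Finset.sum_mul_sum]
    exact Finset.sum_congr rfl fun j _ => Finset.sum_congr rfl fun l _ => by
      simp only [F4]; ring
  simp only [e2]
  simp [integral_const, measure_univ]

lemma trace_sq (M : Matrix (Fin N) (Fin N) ℂ) :
    Matrix.trace (M ^ 2) = ∑ i, ∑ k, M i k * M k i := by
  simp [Matrix.trace, Matrix.diag, pow_two, Matrix.mul_apply]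

lemma first_moment (μ : Measure (UG N)) [IsProbabilityMeasure μ]
    (hinv : ∀ g : UG N, μ.map (fun U => g * U) = μ) :
    ∫ U, Matrix.trace ((U : Matrix (Fin N) (Fin N) ℂ) ^ 2) ∂μ = 0 := by
  have hmem : (Complex.I • (1 : Matrix (Fin N) (Fin N) ℂ)) ∈ Matrix.unitaryGroup (Fin N) ℂ := by
    rw [Matrix.mem_unitaryGroup_iff]
    simp [star_smul, Complex.star_def, Complex.conj_I, smul_mul_assoc, mul_smul_comm,
      smul_smul, Complex.I_mul_I]
  set g : UG N := ⟨Complex.I • (1 : Matrix (Fin N) (Fin N) ℂ), hmem⟩ with hg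
  have hcont : Continuous fun U : UG N => Matrix.trace ((U : Matrix (Fin N) (Fin N) ℂ) ^ 2) := by
    have e : (fun U : UG N => Matrix.trace ((U : Matrix (Fin N) (Fin N) ℂ) ^ 2))
        = fun U : UG N => ∑ i, ∑ k, (U : Matrix (Fin N) (Fin N) ℂ) i k *
            (U : Matrix (Fin N) (Fin N) ℂ) k i := by
      funext U; exact trace_sq _
    rw [e]
    exact continuous_finset_sum _ fun i _ => continuous_finset_sum _ fun k _ =>
      (continuous_entry i k).mul (continuous_entry k i)
  have h := int_invariant μ hinv g hcont
  have hpt : ∀ U : UG N, Matrix.trace (((g * U : UG N) : Matrix (Fin N) (Fin N) ℂ) ^ 2)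
      = - Matrix.trace ((U : Matrix (Fin N) (Fin N) ℂ) ^ 2) := by
    intro U
    have hco : ((g * U : UG N) : Matrix (Fin N) (Fin N) ℂ)
        = Complex.I • (U : Matrix (Fin N) (Fin N) ℂ) := by
      show (Complex.I • (1 : Matrix (Fin N) (Fin N) ℂ)) * (U : Matrix (Fin N) (Fin N) ℂ) = _
      rw [smul_mul_assoc, one_mul]
    rw [hco, smul_pow, Matrix.trace_smul, Complex.I_sq]
    simp
  simp only [hpt] at h
  rw [integral_neg] at h
  linear_combination (-1/2 : ℂ) * h

lemma integral_sum4'' (μ : Measure (UG N)) [IsProbabilityMeasure μ]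
    (G : Fin N → Fin N → Fin N → Fin N → UG N → ℂ)
    (hG : ∀ a b c d, Integrable (G a b c d) μ) :
    ∫ U, ∑ a, ∑ b, ∑ c, ∑ d, G a b c d U ∂μ
      = ∑ a, ∑ b, ∑ c, ∑ d, ∫ U, G a b c d U ∂μ := by
  rw [integral_finset_sum _ (fun a _ => integrable_finset_sum _ fun b _ =>
    integrable_finset_sum _ fun c _ => integrable_finset_sum _ fun d _ => hG a b c d)]
  refine Finset.sum_congr rfl fun a _ => ?_
  rw [integral_finset_sum _ (fun b _ => integrable_finset_sum _ fun c _ =>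
    integrable_finset_sum _ fun d _ => hG a b c d)]
  refine Finset.sum_congr rfl fun b _ => ?_
  rw [integral_finset_sum _ (fun c _ => integrable_finset_sum _ fun d _ => hG a b c d)]
  refine Finset.sum_congr rfl fun c _ => ?_
  rw [integral_finset_sum _ (fun d _ => hG a b c d)]

end TraceSqAux

/-- For the Haar probability measure on `U(N)`, `N ≥ 2`:
`∫ Tr(U²) dU = 0` and `∫ |Tr(U²)|² dU = 2`. -/
theorem trace_sq_moments (N : ℕ) (hN : 2 ≤ N)
    (μ : Measure (Matrix.unitaryGroup (Fin N) ℂ)) [IsProbabilityMeasure μ]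
    (hinv : ∀ g : Matrix.unitaryGroup (Fin N) ℂ,
      μ.map (fun U => g * U) = μ) :
    (∫ U, Matrix.trace ((U : Matrix (Fin N) (Fin N) ℂ) ^ 2) ∂μ = 0)
    ∧ ∫ U, Matrix.trace ((U : Matrix (Fin N) (Fin N) ℂ) ^ 2) *
          (starRingEnd ℂ) (Matrix.trace ((U : Matrix (Fin N) (Fin N) ℂ) ^ 2)) ∂μ
        = 2 := by
  classical
  refine ⟨TraceSqAux.first_moment μ hinv, ?_⟩
  have h0 : 0 < N := by omega
  have h1 : 1 < N := by omega
  set x : Fin N := ⟨0, h0⟩ with hx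
  set y : Fin N := ⟨1, h1⟩ with hy
  have hxy : x ≠ y := by simp [hx, hy, Fin.ext_iff]
  have hpt : ∀ U : Matrix.unitaryGroup (Fin N) ℂ,
      Matrix.trace ((U : Matrix (Fin N) (Fin N) ℂ) ^ 2) *
        (starRingEnd ℂ) (Matrix.trace ((U : Matrix (Fin N) (Fin N) ℂ) ^ 2))
      = ∑ i, ∑ k, ∑ p, ∑ r, TraceSqAux.F4 i k p r k i r p U := by
    intro U
    set u : Matrix (Fin N) (Fin N) ℂ := (U : Matrix (Fin N) (Fin N) ℂ) with hu
    rw [TraceSqAux.trace_sq]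
    calc (∑ i, ∑ k, u i k * u k i) * (starRingEnd ℂ) (∑ i, ∑ k, u i k * u k i)
        = (∑ i, ∑ k, u i k * u k i) *
            (∑ p, ∑ r, (starRingEnd ℂ) (u p r) * (starRingEnd ℂ) (u r p)) := by
          simp only [map_sum, _root_.map_mul]
      _ = ∑ i, ∑ p, ((∑ k, u i k * u k i) *
            (∑ r, (starRingEnd ℂ) (u p r) * (starRingEnd ℂ) (u r p))) := by
          rw [Finset.sum_mul_sum]
      _ = ∑ i, ∑ p, ∑ k, ∑ r, (u i k * u k i) *
            ((starRingEnd ℂ) (u p r) * (starRingEnd ℂ) (u r p)) :=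
          Finset.sum_congr rfl fun i _ => Finset.sum_congr rfl fun p _ => by
            rw [Finset.sum_mul_sum]
      _ = ∑ i, ∑ k, ∑ p, ∑ r, TraceSqAux.F4 i k p r k i r p U := by
          refine Finset.sum_congr rfl fun i _ => ?_
          rw [Finset.sum_comm]
          refine Finset.sum_congr rfl fun k _ => Finset.sum_congr rfl fun p _ =>
            Finset.sum_congr rfl fun r _ => ?_
          simp only [TraceSqAux.F4, ← hu]
          ring
  have hexp : (∫ U, Matrix.trace ((U : Matrix (Fin N) (Fin N) ℂ) ^ 2) *
        (starRingEnd ℂ) (Matrix.trace ((U : Matrix (Fin N) (Fin N) ℂ) ^ 2)) ∂μ)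
      = ∑ i, ∑ k, ∑ p, ∑ r, TraceSqAux.mm μ i k p r k i r p := by
    rw [show (fun U : Matrix.unitaryGroup (Fin N) ℂ =>
        Matrix.trace ((U : Matrix (Fin N) (Fin N) ℂ) ^ 2) *
          (starRingEnd ℂ) (Matrix.trace ((U : Matrix (Fin N) (Fin N) ℂ) ^ 2)))
      = fun U => ∑ i, ∑ k, ∑ p, ∑ r, TraceSqAux.F4 i k p r k i r p U from funext hpt]
    exact TraceSqAux.integral_sum4'' μ (fun i k p r => TraceSqAux.F4 i k p r k i r p)
      (fun a b c d => TraceSqAux.integrable_F4 μ a b c d b a d c)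
  rw [hexp]
  have hcoll : ∀ (f : Fin N → Fin N → ℂ) (i k : Fin N),
      (∑ p, ∑ r, (if p = i ∧ r = k then f p r else 0)) = f i k := by
    intro f i k
    have hinner : ∀ p, (∑ r, if p = i ∧ r = k then f p r else 0)
        = if p = i then f p k else 0 := by
      intro p
      by_cases hp : p = i
      · subst hp
        simp [Finset.sum_ite_eq']
      · simp [hp]
    simp only [hinner]
    simp [Finset.sum_ite_eq']
  have S1 : (∑ i, ∑ k, TraceSqAux.mm μ x y x y k i k i) = 1 := by
    rw [Finset.sum_comm, TraceSqAux.sumI1 μ x y x y]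
    simp
  have S2 : (∑ i, ∑ k, TraceSqAux.mm μ x y y x k i i k) = 1 := by
    rw [Finset.sum_comm, TraceSqAux.sumI2 μ x y y x]
    simp
  calc ∑ i, ∑ k, ∑ p, ∑ r, TraceSqAux.mm μ i k p r k i r p
      = ∑ i, ∑ k, ∑ p, ∑ r,
          ((if p = i ∧ r = k then TraceSqAux.mm μ x y x y k i r p else 0)
            + (if p = k ∧ r = i then TraceSqAux.mm μ x y y x k i r p else 0)) :=
        Finset.sum_congr rfl fun i _ => Finset.sum_congr rfl fun k _ =>
          Finset.sum_congr rfl fun p _ => Finset.sum_congr rfl fun r _ =>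
            TraceSqAux.mmspan μ hinv x y hxy i k p r k i r p
    _ = ∑ i, ∑ k, ((∑ p, ∑ r, if p = i ∧ r = k then TraceSqAux.mm μ x y x y k i r p else 0)
          + (∑ p, ∑ r, if p = k ∧ r = i then TraceSqAux.mm μ x y y x k i r p else 0)) := by
        refine Finset.sum_congr rfl fun i _ => Finset.sum_congr rfl fun k _ => ?_
        simp only [Finset.sum_add_distrib]
    _ = ∑ i, ∑ k, (TraceSqAux.mm μ x y x y k i k i + TraceSqAux.mm μ x y y x k i i k) := by
        refine Finset.sum_congr rfl fun i _ => Finset.sum_congr rfl fun k _ => ?_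
        rw [hcoll (fun p r => TraceSqAux.mm μ x y x y k i r p) i k,
          hcoll (fun p r => TraceSqAux.mm μ x y y x k i r p) k i]
    _ = (∑ i, ∑ k, TraceSqAux.mm μ x y x y k i k i)
          + ∑ i, ∑ k, TraceSqAux.mm μ x y y x k i i k := by
        simp only [Finset.sum_add_distrib]
    _ = 2 := by rw [S1, S2]; norm_num
end
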